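/- arXiv:math/0508091 — 6 statements merged into one kernel-verified Lean document; each statement's English description precedes it below -/
import Mathlib

section
/- Let A be a locally C*-algebra with S(A) its set of continuous C*-seminorms, directed by pointwise order. The canonical map from A to the inverse limit of the C*-algebras A_p = A/ker p (with connecting maps π_{pq} : A_p → A_q for p ≥ q induced by the identity) is an isomorphism of topological *-algebras. -/
noncomputable section

open Filter Topology Set
open scoped InnerProductSpace

universe u v w

/-- A continuous C*-seminorm on a topological `*`-algebra over `ℂ`. -/
structure CStarSeminorm (A : Type*) [Ring A] [StarRing A] [Algebra ℂ A]
    [TopologicalSpace A] where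
  toFun : A → ℝ
  nonneg' : ∀ a, 0 ≤ toFun a
  add_le' : ∀ a b, toFun (a + b) ≤ toFun a + toFun b
  smul' : ∀ (c : ℂ) (a : A), toFun (c • a) = ‖c‖ * toFun a
  mul_le' : ∀ a b, toFun (a * b) ≤ toFun a * toFun b
  star_mul_self' : ∀ a, toFun (star a * a) = toFun a ^ 2
  continuous' : Continuous toFun

instance {A : Type*} [Ring A] [StarRing A] [Algebra ℂ A] [TopologicalSpace A] :
    FunLike (CStarSeminorm A) A ℝ where
  coe := CStarSeminorm.toFun
  coe_injective := by rintro ⟨⟩ ⟨⟩ h; congr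

/-- `A` is a locally C*-algebra: it is a (complete, Hausdorff, topological) `*`-algebra
whose topology is determined by its continuous C*-seminorms: a filter tends to `0`
iff its image under every continuous C*-seminorm tends to `0`. -/
def IsLocallyCStarAlgebra (A : Type*) [Ring A] [StarRing A] [Algebra ℂ A]
    [TopologicalSpace A] : Prop :=
  ∀ l : Filter A, Tendsto id l (nhds 0) ↔
    ∀ p : CStarSeminorm A, Tendsto (fun a => p a) l (nhds (0 : ℝ))

/-- A Hilbert module over a locally C*-algebra `A`: a right `A`-module with an
`A`-valued inner product, complete for the topology determined by the seminorms
`ξ ↦ √(p ⟨ξ,ξ⟩)`, `p` a continuous C*-seminorm on `A`. -/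
structure HilbertModule (A : Type u) [Ring A] [StarRing A] [Algebra ℂ A] [UniformSpace A]
    (E : Type v) [AddCommGroup E] [Module ℂ E] [UniformSpace E] where
  smul : E → A → E
  smul_add : ∀ ξ a b, smul ξ (a + b) = smul ξ a + smul ξ b
  add_smul : ∀ ξ η a, smul (ξ + η) a = smul ξ a + smul η a
  smul_smul : ∀ ξ a b, smul (smul ξ a) b = smul ξ (a * b)
  smul_commC : ∀ (c : ℂ) ξ a, smul (c • ξ) a = c • smul ξ a
  smul_algebra : ∀ (c : ℂ) ξ a, smul ξ (c • a) = c • smul ξ a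
  inner : E → E → A
  inner_add_right : ∀ ξ η ζ, inner ξ (η + ζ) = inner ξ η + inner ξ ζ
  inner_smulC : ∀ (c : ℂ) ξ η, inner ξ (c • η) = c • inner ξ η
  inner_smul_right : ∀ ξ η a, inner ξ (smul η a) = inner ξ η * a
  star_inner : ∀ ξ η, star (inner ξ η) = inner η ξ
  inner_self_pos : ∀ ξ, ∃ a, inner ξ ξ = star a * a
  inner_self_eq_zero : ∀ ξ, inner ξ ξ = 0 → ξ = 0
  topology_eq : ∀ l : Filter E, Tendsto id l (nhds 0) ↔
      ∀ p : CStarSeminorm A, Tendsto (fun ξ => Real.sqrt (p (inner ξ ξ))) l (nhds (0 : ℝ))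
  complete : CompleteSpace E

/-- A Hilbert C*-module over a C*-algebra `B` (normed version). -/
structure HilbertCStarModule (B : Type u) [NormedRing B] [StarRing B] [CStarRing B]
    [NormedAlgebra ℂ B] [StarModule ℂ B] [CompleteSpace B]
    (E : Type v) [NormedAddCommGroup E] [NormedSpace ℂ E] where
  smul : E → B → E
  smul_add : ∀ ξ a b, smul ξ (a + b) = smul ξ a + smul ξ b
  add_smul : ∀ ξ η a, smul (ξ + η) a = smul ξ a + smul η a
  smul_smul : ∀ ξ a b, smul (smul ξ a) b = smul ξ (a * b)
  smul_commC : ∀ (c : ℂ) ξ a, smul (c • ξ) a = c • smul ξ a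
  smul_algebra : ∀ (c : ℂ) ξ a, smul ξ (c • a) = c • smul ξ a
  inner : E → E → B
  inner_add_right : ∀ ξ η ζ, inner ξ (η + ζ) = inner ξ η + inner ξ ζ
  inner_smulC : ∀ (c : ℂ) ξ η, inner ξ (c • η) = c • inner ξ η
  inner_smul_right : ∀ ξ η a, inner ξ (smul η a) = inner ξ η * a
  star_inner : ∀ ξ η, star (inner ξ η) = inner η ξ
  inner_self_pos : ∀ ξ, ∃ a, inner ξ ξ = star a * a
  inner_self_eq_zero : ∀ ξ, inner ξ ξ = 0 → ξ = 0
  norm_eq : ∀ ξ, ‖ξ‖ = Real.sqrt ‖inner ξ ξ‖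
  complete : CompleteSpace E

/-- A representation of a topological `*`-algebra `A` on a Hilbert space `H`:
a continuous `*`-homomorphism into the bounded operators. -/
structure RepOn (A : Type u) [Ring A] [StarRing A] [Algebra ℂ A] [TopologicalSpace A]
    (H : Type v) [NormedAddCommGroup H] [InnerProductSpace ℂ H] [CompleteSpace H] where
  toFun : A → H →L[ℂ] H
  map_add : ∀ a b, toFun (a + b) = toFun a + toFun b
  map_mul : ∀ a b, toFun (a * b) = (toFun a).comp (toFun b)
  map_smulC : ∀ (c : ℂ) a, toFun (c • a) = c • toFun a
  map_star : ∀ a, toFun (star a) = ContinuousLinearMap.adjoint (toFun a)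
  continuous : Continuous toFun

/-- A representation is non-degenerate if `φ(A)H` spans a dense subspace. -/
def RepOn.Nondegenerate {A : Type u} [Ring A] [StarRing A] [Algebra ℂ A] [TopologicalSpace A]
    {H : Type v} [NormedAddCommGroup H] [InnerProductSpace ℂ H] [CompleteSpace H]
    (φ : RepOn A H) : Prop :=
  Dense (↑(Submodule.span ℂ {h : H | ∃ a x, h = φ.toFun a x}) : Set H)

/-- Unitary equivalence of two representations. -/
def UnitarilyEquiv {A : Type u} [Ring A] [StarRing A] [Algebra ℂ A] [TopologicalSpace A]
    {H₁ : Type v} [NormedAddCommGroup H₁] [InnerProductSpace ℂ H₁] [CompleteSpace H₁]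
    {H₂ : Type w} [NormedAddCommGroup H₂] [InnerProductSpace ℂ H₂] [CompleteSpace H₂]
    (φ₁ : RepOn A H₁) (φ₂ : RepOn A H₂) : Prop :=
  ∃ U : H₁ ≃ₗᵢ[ℂ] H₂, ∀ a h, U (φ₁.toFun a h) = φ₂.toFun a (U h)

/-- The data of the induced Hilbert space `E ⊗_φ H`: a Hilbert space `K` together with
a map `ι : E × H → K` whose image spans a dense subspace and such that
`⟪ι ξ h₁, ι η h₂⟫ = ⟪h₁, φ(⟨ξ,η⟩) h₂⟫`. -/
structure InducedSpace {B : Type u} {E : Type v}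
    {H : Type w} [NormedAddCommGroup H] [InnerProductSpace ℂ H] [CompleteSpace H]
    (innerE : E → E → B) (φ : B → H →L[ℂ] H)
    (K : Type*) [NormedAddCommGroup K] [InnerProductSpace ℂ K] [CompleteSpace K] where
  ι : E → H → K
  inner_eq : ∀ ξ η h₁ h₂, ⟪ι ξ h₁, ι η h₂⟫_ℂ = ⟪h₁, φ (innerE ξ η) h₂⟫_ℂ
  dense : Dense (↑(Submodule.span ℂ {k : K | ∃ ξ h, k = ι ξ h}) : Set K)

/-- `S` is the adjoint of `T` relative to the `B`-valued inner product `innerE`. -/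
def Adjointable {B : Type u} {E : Type v} (innerE : E → E → B) (T S : E → E) : Prop :=
  ∀ ξ η, innerE (T ξ) η = innerE ξ (S η)

/-- `p̃(T) ≤ C` for the operator seminorm `p̃` associated to a C*-seminorm `p`. -/
def OpSeminormLE {A : Type u} {E : Type v} (innerE : E → E → A) (p : A → ℝ)
    (T : E → E) (C : ℝ) : Prop :=
  ∀ ξ, p (innerE (T ξ) (T ξ)) ≤ C ^ 2 * p (innerE ξ ξ)

/-- A non-degenerate continuous action of a locally C*-algebra `A` on a Hilbert
module `E` over a locally C*-algebra `B`, i.e. a non-degenerate continuous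
`*`-morphism `A → L_B(E)`. -/
structure ModuleAction (A : Type u) [Ring A] [StarRing A] [Algebra ℂ A] [UniformSpace A]
    {B : Type v} [Ring B] [StarRing B] [Algebra ℂ B] [UniformSpace B]
    {E : Type w} [AddCommGroup E] [Module ℂ E] [UniformSpace E]
    (M : HilbertModule B E) where
  Φ : A → E → E
  map_add : ∀ a b ξ, Φ (a + b) ξ = Φ a ξ + Φ b ξ
  map_addE : ∀ a ξ η, Φ a (ξ + η) = Φ a ξ + Φ a η
  map_mul : ∀ a b ξ, Φ (a * b) ξ = Φ a (Φ b ξ)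
  map_smulC : ∀ (c : ℂ) a ξ, Φ (c • a) ξ = c • Φ a ξ
  map_smulE : ∀ (c : ℂ) a ξ, Φ a (c • ξ) = c • Φ a ξ
  map_smulB : ∀ a ξ b, Φ a (M.smul ξ b) = M.smul (Φ a ξ) b
  adjoint : ∀ a, Adjointable M.inner (Φ a) (Φ (star a))
  continuous : ∀ q : CStarSeminorm B, ∃ p : CStarSeminorm A,
      ∀ a, OpSeminormLE M.inner (fun x => q x) (Φ a) (p a)
  nondeg : Dense (↑(Submodule.span ℂ {ξ : E | ∃ a η, ξ = Φ a η}) : Set E)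

/-- `ψ` is the representation induced (via the induced space data `ind`) from the
action `Φ` of `A` on the module. -/
def IsInducedRep {A : Type u} [Ring A] [StarRing A] [Algebra ℂ A] [TopologicalSpace A]
    {B : Type*} {E : Type*}
    {H : Type*} [NormedAddCommGroup H] [InnerProductSpace ℂ H] [CompleteSpace H]
    {K : Type*} [NormedAddCommGroup K] [InnerProductSpace ℂ K] [CompleteSpace K]
    {innerE : E → E → B} {φ : B → H →L[ℂ] H}
    (Φ : A → E → E) (ind : InducedSpace innerE φ K) (ψ : RepOn A K) : Prop :=
  ∀ a ξ h, ψ.toFun a (ind.ι ξ h) = ind.ι (Φ a ξ) h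

/-- The data of the quotient C*-algebra `A_p = A / ker p` of a locally C*-algebra by a
continuous C*-seminorm `p`: a C*-algebra together with a surjective `*`-homomorphism
whose norm is induced by `p`. -/
structure CStarQuotient (A : Type u) [Ring A] [StarRing A] [Algebra ℂ A] [TopologicalSpace A]
    (p : CStarSeminorm A)
    (Ap : Type v) [NormedRing Ap] [StarRing Ap] [CStarRing Ap] [NormedAlgebra ℂ Ap]
    [StarModule ℂ Ap] [CompleteSpace Ap] where
  π : A →⋆ₐ[ℂ] Ap
  surj : Function.Surjective π
  norm_eq : ∀ a, ‖π a‖ = p a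

/-- The data of the quotient Hilbert C*-module `E_p = E / {ξ | p⟨ξ,ξ⟩ = 0}` over
`A_p`, for a Hilbert module `E` over a locally C*-algebra `A`. -/
structure ModuleQuotient {A : Type u} [Ring A] [StarRing A] [Algebra ℂ A] [UniformSpace A]
    {E : Type v} [AddCommGroup E] [Module ℂ E] [UniformSpace E]
    (M : HilbertModule A E) (p : CStarSeminorm A)
    {Ap : Type w} [NormedRing Ap] [StarRing Ap] [CStarRing Ap] [NormedAlgebra ℂ Ap]
    [StarModule ℂ Ap] [CompleteSpace Ap] (Q : CStarQuotient A p Ap)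
    {Ep : Type*} [NormedAddCommGroup Ep] [NormedSpace ℂ Ep]
    (Mp : HilbertCStarModule Ap Ep) where
  σ : E →ₗ[ℂ] Ep
  surj : Function.Surjective σ
  inner_eq : ∀ ξ η, Mp.inner (σ ξ) (σ η) = Q.π (M.inner ξ η)
  smul_eq : ∀ ξ a, σ (M.smul ξ a) = Mp.smul (σ ξ) (Q.π a)

/-- The data of an isomorphism of the locally C*-algebra `B` onto `K_A(E)`, the
generalized compact operators of a full Hilbert `A`-module `E`; this witnesses
strong Morita equivalence of `A` and `B`. -/
structure MoritaData (A : Type u) [Ring A] [StarRing A] [Algebra ℂ A] [UniformSpace A]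
    (B : Type v) [Ring B] [StarRing B] [Algebra ℂ B] [UniformSpace B]
    (E : Type w) [AddCommGroup E] [Module ℂ E] [UniformSpace E]
    (M : HilbertModule A E) where
  Φ : B → E → E
  map_add : ∀ b c ξ, Φ (b + c) ξ = Φ b ξ + Φ c ξ
  map_mul : ∀ b c ξ, Φ (b * c) ξ = Φ b (Φ c ξ)
  map_smulC : ∀ (z : ℂ) b ξ, Φ (z • b) ξ = z • Φ b ξ
  adjoint : ∀ b, Adjointable M.inner (Φ b) (Φ (star b))
  inj : ∀ b, (∀ ξ, Φ b ξ = 0) → b = 0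
  cont : ∀ p : CStarSeminorm A, ∃ q : CStarSeminorm B,
      ∀ b, OpSeminormLE M.inner (fun x => p x) (Φ b) (q b)
  cont_inv : ∀ q : CStarSeminorm B, ∃ p : CStarSeminorm A,
      ∀ (b : B) (C : ℝ), 0 ≤ C → OpSeminormLE M.inner (fun x => p x) (Φ b) C → q b ≤ C
  theta_mem : ∀ ξ η, ∃ b, ∀ ζ, Φ b ζ = M.smul ξ (M.inner η ζ)
  dense_theta : Dense (↑(Submodule.span ℂ
      {b : B | ∃ ξ η, ∀ ζ, Φ b ζ = M.smul ξ (M.inner η ζ)}) : Set B)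
  full : Dense (↑(Submodule.span ℂ {a : A | ∃ ξ η, a = M.inner ξ η}) : Set A)
section Aux

variable {A : Type*} [Ring A] [StarRing A] [Algebra ℂ A] [TopologicalSpace A]

theorem CStarSeminorm.toFun_zero (p : CStarSeminorm A) : p.toFun 0 = 0 := by
  have := p.smul' 0 0
  simpa using this

theorem CStarSeminorm.map_zero' (p : CStarSeminorm A) : p 0 = 0 :=
  p.toFun_zero

instance : PartialOrder (CStarSeminorm A) :=
  PartialOrder.lift (fun p => (p : A → ℝ)) DFunLike.coe_injective

instance : SemilatticeSup (CStarSeminorm A) where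
  sup p q :=
    { toFun := fun a => max (p.toFun a) (q.toFun a)
      nonneg' := fun a => le_max_of_le_left (p.nonneg' a)
      add_le' := fun a b =>
        max_le ((p.add_le' a b).trans (add_le_add (le_max_left _ _) (le_max_left _ _)))
          ((q.add_le' a b).trans (add_le_add (le_max_right _ _) (le_max_right _ _)))
      smul' := fun c a => by
        rw [p.smul', q.smul']
        rcases le_total (p.toFun a) (q.toFun a) with h | h
        · rw [max_eq_right h, max_eq_right (mul_le_mul_of_nonneg_left h (norm_nonneg c))]
        · rw [max_eq_left h, max_eq_left (mul_le_mul_of_nonneg_left h (norm_nonneg c))]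
      mul_le' := fun a b => by
        exact max_le ((p.mul_le' a b).trans (mul_le_mul (le_max_left _ _) (le_max_left _ _)
            (p.nonneg' b) (le_max_of_le_left (p.nonneg' a))))
          ((q.mul_le' a b).trans (mul_le_mul (le_max_right _ _) (le_max_right _ _)
            (q.nonneg' b) (le_max_of_le_left (p.nonneg' a))))
      star_mul_self' := fun a => by
        rw [p.star_mul_self', q.star_mul_self']
        rcases le_total (p.toFun a) (q.toFun a) with h | h
        · rw [max_eq_right h, max_eq_right (pow_le_pow_left₀ (p.nonneg' a) h 2)]
        · rw [max_eq_left h, max_eq_left (pow_le_pow_left₀ (q.nonneg' a) h 2)]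
      continuous' := p.continuous'.max q.continuous' }
  le_sup_left p q a := le_max_left _ _
  le_sup_right p q a := le_max_right _ _
  sup_le p q r hp hq a := max_le (hp a) (hq a)

instance : Nonempty (CStarSeminorm A) :=
  ⟨{ toFun := fun _ => 0
     nonneg' := fun _ => le_refl 0
     add_le' := fun _ _ => by norm_num
     smul' := fun c _ => (mul_zero _).symm
     mul_le' := fun _ _ => by norm_num
     star_mul_self' := fun _ => by norm_num
     continuous' := continuous_const }⟩

end Aux

/-- The canonical map from a locally C*-algebra `A` to the inverse
limit of the quotient C*-algebras `A_p = A/ker p` (over all continuous C*-seminorms,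
with the canonical connecting maps) is an isomorphism of topological `*`-algebras;
we exhibit it as a homeomorphism onto the inverse-limit subspace of the product which is
compatible with the quotient `*`-homomorphisms. -/
theorem statement1 (A : Type u) [Ring A] [StarRing A] [Algebra ℂ A] [UniformSpace A] [IsUniformAddGroup A]
    [IsTopologicalRing A] [ContinuousStar A] [ContinuousSMul ℂ A] [CompleteSpace A] [T2Space A]
    (hA : IsLocallyCStarAlgebra A)
    (Ap : CStarSeminorm A → Type u)
    [∀ p, NormedRing (Ap p)] [∀ p, StarRing (Ap p)] [∀ p, CStarRing (Ap p)]
    [∀ p, NormedAlgebra ℂ (Ap p)] [∀ p, StarModule ℂ (Ap p)] [∀ p, CompleteSpace (Ap p)]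
    (Q : ∀ p, CStarQuotient A p (Ap p))
    (πpq : ∀ p q : CStarSeminorm A, (∀ a, q a ≤ p a) → (Ap p →⋆ₐ[ℂ] Ap q))
    (hπpq : ∀ (p q : CStarSeminorm A) (h : ∀ a, q a ≤ p a) (a : A),
      πpq p q h ((Q p).π a) = (Q q).π a) :
    ∃ e : A ≃ₜ {x : ∀ p, Ap p //
        ∀ (p q : CStarSeminorm A) (h : ∀ a, q a ≤ p a), πpq p q h (x p) = x q},
      ∀ a p, (e a).1 p = (Q p).π a := by
  classical
  -- continuity of each quotient map
  have hcontπ : ∀ p : CStarSeminorm A, Continuous fun a : A => (Q p).π a := by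
    intro p
    rw [continuous_iff_continuousAt]
    intro a
    rw [ContinuousAt, tendsto_iff_norm_sub_tendsto_zero]
    have heq : (fun x : A => ‖(Q p).π x - (Q p).π a‖) = fun x : A => p (x - a) := by
      funext x
      rw [← map_sub, (Q p).norm_eq]
    rw [heq]
    have h0 : Tendsto (fun x : A => x - a) (𝓝 a) (𝓝 (a - a)) :=
      Filter.Tendsto.sub tendsto_id tendsto_const_nhds
    rw [sub_self] at h0
    have := (p.continuous'.tendsto 0).comp h0
    rw [CStarSeminorm.toFun_zero] at this
    exact this
  let f : A → {x : ∀ p, Ap p //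
      ∀ (p q : CStarSeminorm A) (h : ∀ a, q a ≤ p a), πpq p q h (x p) = x q} :=
    fun a => ⟨fun p => (Q p).π a, fun p q h => hπpq p q h a⟩
  have hf_cont : Continuous f :=
    Continuous.subtype_mk (continuous_pi fun p => hcontπ p) _
  -- injectivity
  have hinj : Function.Injective f := by
    intro a b hab
    have hcomp : ∀ p : CStarSeminorm A, (Q p).π a = (Q p).π b :=
      fun p => congrFun (congrArg Subtype.val hab) p
    have hzero : ∀ p : CStarSeminorm A, p (a - b) = 0 := by
      intro p
      rw [← (Q p).norm_eq, map_sub, hcomp p, sub_self, norm_zero]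
    have hmem : ∀ U ∈ 𝓝 (0 : A), a - b ∈ U := by
      have := (hA (pure (a - b))).2 (by
        intro p
        rw [Filter.tendsto_pure_left]
        intro U hU
        rw [hzero p] at *
        exact mem_of_mem_nhds hU)
      rw [Filter.tendsto_pure_left] at this
      simpa using this
    have hab0 : a - b = 0 := by
      by_contra hne
      have := hmem {a - b}ᶜ (isOpen_compl_singleton.mem_nhds (by simpa using Ne.symm hne))
      simp at this
    rw [sub_eq_zero] at hab0
    exact hab0
  -- surjectivity
  have hsurj : Function.Surjective f := by
    rintro ⟨x, hx⟩
    choose g hg using fun p => (Q p).surj (x p)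
    have key : ∀ p r : CStarSeminorm A, p ≤ r → (Q p).π (g r) = x p := by
      intro p r h
      rw [← hπpq r p h, hg, hx r p h]
    have keyzero : ∀ (p r s : CStarSeminorm A), p ≤ r → p ≤ s → p (g s - g r) = 0 := by
      intro p r s hr hs
      rw [← (Q p).norm_eq, map_sub, key p r hr, key p s hs, sub_self, norm_zero]
    have hcauchy : Cauchy (Filter.map g Filter.atTop) := by
      constructor
      · exact Filter.NeBot.map Filter.atTop_neBot g
      · rw [uniformity_eq_comap_nhds_zero A, Filter.prod_map_map_eq,
          ← Filter.map_le_iff_le_comap, Filter.map_map]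
        have key2 : Tendsto (fun rs : CStarSeminorm A × CStarSeminorm A => g rs.2 - g rs.1)
            (Filter.atTop ×ˢ Filter.atTop) (𝓝 0) := by
          refine (hA (Filter.map
              (fun rs : CStarSeminorm A × CStarSeminorm A => g rs.2 - g rs.1)
              (Filter.atTop ×ˢ Filter.atTop))).2 ?_
          intro p
          rw [Filter.tendsto_map'_iff]
          have hev : ∀ᶠ rs : CStarSeminorm A × CStarSeminorm A in
              Filter.atTop ×ˢ Filter.atTop, p (g rs.2 - g rs.1) = 0 := by
            filter_upwards [Filter.prod_mem_prod (Filter.eventually_ge_atTop p)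
              (Filter.eventually_ge_atTop p)] with rs hrs
            exact keyzero p rs.1 rs.2 hrs.1 hrs.2
          exact Filter.Tendsto.congr' (hev.mono fun rs h => h.symm) tendsto_const_nhds
        exact key2
    obtain ⟨a, ha⟩ := CompleteSpace.complete hcauchy
    refine ⟨a, ?_⟩
    have hga : Tendsto g Filter.atTop (𝓝 a) := ha
    have hxa : ∀ p, (Q p).π a = x p := by
      intro p
      have h1 : Tendsto (fun r => (Q p).π (g r)) Filter.atTop (𝓝 ((Q p).π a)) :=
        ((hcontπ p).tendsto a).comp hga
      have h2 : Tendsto (fun r => (Q p).π (g r)) Filter.atTop (𝓝 (x p)) := by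
        refine Filter.Tendsto.congr' ?_ (tendsto_const_nhds (x := x p))
        filter_upwards [Filter.eventually_ge_atTop p] with r hr
        exact (key p r hr).symm
      exact tendsto_nhds_unique h1 h2
    exact Subtype.ext (funext hxa)
  -- inducing
  have hback : ∀ (l : Filter A) (a : A), Tendsto f l (𝓝 (f a)) → l ≤ 𝓝 a := by
    intro l a hl
    have hcomps : ∀ p : CStarSeminorm A,
        Tendsto (fun x : A => (Q p).π x) l (𝓝 ((Q p).π a)) := by
      intro p
      exact (((continuous_apply p).comp continuous_subtype_val).tendsto (f a)).comp hl
    have h0 : Tendsto (fun x : A => x - a) l (𝓝 0) := by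
      refine (hA (Filter.map (fun x : A => x - a) l)).2 ?_
      intro p
      rw [Filter.tendsto_map'_iff]
      have hn := tendsto_iff_norm_sub_tendsto_zero.mp (hcomps p)
      have heq : (fun x : A => ‖(Q p).π x - (Q p).π a‖) = fun x : A => p (x - a) := by
        funext x
        rw [← map_sub, (Q p).norm_eq]
      rwa [heq] at hn
    have := h0.add (tendsto_const_nhds (x := a))
    exact tendsto_id'.1 (by simpa using this : Tendsto (fun x : A => x) l (𝓝 a))
  have hind : IsInducing f := by
    refine isInducing_iff_nhds.2 fun a => le_antisymm ?_ ?_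
    · exact (Filter.map_le_iff_le_comap).1 (hf_cont.tendsto a)
    · exact hback _ a Filter.tendsto_comap
  exact ⟨(Equiv.ofBijective f ⟨hinj, hsurj⟩).toHomeomorphOfIsInducing hind,
    fun a p => rfl⟩
end
end

section
/- Let A and B be locally C*-algebras, E a Hilbert B-module on which A acts non-degenerately via Φ : A → L_B(E), and let (φ₁, H₁), (φ₂, H₂) be unitarily equivalent non-degenerate representations of B. Then the Rieffel-induced representations (_E^Aφ₁, _EH₁) and (_E^Aφ₂, _EH₂) of A are unitarily equivalent; explicitly, if U : H₁ → H₂ implements the equivalence, then ξ ⊗ h ↦ ξ ⊗ Uh extends to a unitary V : _EH₁ → _EH₂ intertwining _E^Aφ₁ and _E^Aφ₂. -/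
noncomputable section

open Filter Topology Set
open scoped InnerProductSpace

universe u v w

section AuxUnitary

variable {ι : Type*} {K₁ K₂ : Type*}
    [NormedAddCommGroup K₁] [InnerProductSpace ℂ K₁] [CompleteSpace K₁]
    [NormedAddCommGroup K₂] [InnerProductSpace ℂ K₂] [CompleteSpace K₂]

theorem exists_isometry_aux (s : ι → K₁) (t : ι → K₂)
    (hst : ∀ i j, ⟪s i, s j⟫_ℂ = ⟪t i, t j⟫_ℂ)
    (hd₁ : Dense (↑(Submodule.span ℂ (Set.range s)) : Set K₁)) :
    ∃ T : K₁ →ₗᵢ[ℂ] K₂, ∀ i, T (s i) = t i := by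
  classical
  set G : Submodule ℂ (K₁ × K₂) :=
    Submodule.span ℂ (Set.range (fun i => ((s i, t i) : K₁ × K₂))) with hG
  have key : ∀ x ∈ G, ∀ y ∈ G, ⟪x.1, y.1⟫_ℂ = ⟪x.2, y.2⟫_ℂ := by
    intro x hx
    induction hx using Submodule.span_induction with
    | mem x hxm =>
      obtain ⟨i, rfl⟩ := hxm
      intro y hy
      induction hy using Submodule.span_induction with
      | mem y hym => obtain ⟨j, rfl⟩ := hym; exact hst i j
      | zero => simp
      | add y z _ _ hy hz => simp only [Prod.fst_add, Prod.snd_add, inner_add_right, hy, hz]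
      | smul c y _ hy => simp only [Prod.smul_fst, Prod.smul_snd, inner_smul_right, hy]
    | zero => intro y hy; simp
    | add x z _ _ hx hz =>
      intro y hy
      simp only [Prod.fst_add, Prod.snd_add, inner_add_left, hx y hy, hz y hy]
    | smul c x _ hx =>
      intro y hy
      simp only [Prod.smul_fst, Prod.smul_snd, inner_smul_left, hx y hy]
  set p₁ : G →ₗ[ℂ] K₁ := (LinearMap.fst ℂ K₁ K₂).comp G.subtype with hp₁
  set p₂ : G →ₗ[ℂ] K₂ := (LinearMap.snd ℂ K₁ K₂).comp G.subtype with hp₂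
  have hzero : ∀ g : G, p₁ g = 0 → g = 0 := by
    intro g hg
    have h1' : (g : K₁ × K₂).1 = 0 := hg
    have h2 : ⟪(g : K₁ × K₂).2, (g : K₁ × K₂).2⟫_ℂ = 0 := by
      rw [← key (g : K₁ × K₂) g.2 (g : K₁ × K₂) g.2, h1']
      simp
    have h2' : (g : K₁ × K₂).2 = 0 := inner_self_eq_zero.mp h2
    apply Subtype.ext
    exact Prod.ext h1' h2'
  have hinj : Function.Injective p₁ := by
    intro a b hab
    have : a - b = 0 := hzero (a - b) (by rw [map_sub, hab, sub_self])
    exact sub_eq_zero.mp this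
  set S := LinearMap.range p₁ with hS
  set e := LinearEquiv.ofInjective p₁ hinj with he
  set f : S →ₗ[ℂ] K₂ := p₂.comp e.symm.toLinearMap with hf
  have hfe : ∀ x : S, ((e.symm x : G) : K₁ × K₂).1 = (x : K₁) := by
    intro x
    have h1 : e (e.symm x) = x := e.apply_symm_apply x
    have h2 : ((e (e.symm x) : S) : K₁) = p₁ (e.symm x) :=
      LinearEquiv.ofInjective_apply p₁ (e.symm x)
    rw [h1] at h2
    exact h2.symm
  have hfval : ∀ x : S, f x = ((e.symm x : G) : K₁ × K₂).2 := fun x => rfl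
  have hnorm : ∀ x : S, ‖f x‖ = ‖x‖ := by
    intro x
    have hk := key ((e.symm x : G) : K₁ × K₂) (e.symm x).2
      ((e.symm x : G) : K₁ × K₂) (e.symm x).2
    rw [hfval x, Submodule.coe_norm x,
      norm_eq_sqrt_re_inner (𝕜 := ℂ), norm_eq_sqrt_re_inner (𝕜 := ℂ), ← hk, hfe x]
  set T₀ : S →ₗᵢ[ℂ] K₂ := ⟨f, hnorm⟩ with hT₀
  have hSspan : S = Submodule.span ℂ (Set.range s) := by
    rw [hS, hp₁, LinearMap.range_comp, Submodule.range_subtype, hG, Submodule.map_span]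
    congr 1
    ext k
    constructor
    · rintro ⟨_, ⟨i, rfl⟩, rfl⟩; exact ⟨i, rfl⟩
    · rintro ⟨i, rfl⟩; exact ⟨(s i, t i), ⟨i, rfl⟩, rfl⟩
  have hdS : Dense (S : Set K₁) := by rw [hSspan]; exact hd₁
  have hdr : DenseRange ⇑S.subtypeL := by
    have := hdS.denseRange_val
    simpa using this
  have hui : IsUniformInducing ⇑S.subtypeL := by
    show IsUniformInducing ((↑) : S → K₁)
    exact isUniformEmbedding_subtype_val.toIsUniformInducing
  set T : K₁ →L[ℂ] K₂ := T₀.toContinuousLinearMap.extend S.subtypeL with hT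
  have hTS : ∀ x : S, T (x : K₁) = f x := by
    intro x
    have := T₀.toContinuousLinearMap.extend_eq (e := S.subtypeL) hdr hui x
    exact this
  have hTnorm : ∀ k : K₁, ‖T k‖ = ‖k‖ := by
    have heq : (fun k : K₁ => ‖T k‖) = fun k => ‖k‖ := by
      refine Continuous.ext_on hdS (T.continuous.norm) continuous_norm ?_
      rintro k hk
      have : T ((⟨k, hk⟩ : S) : K₁) = f ⟨k, hk⟩ := hTS ⟨k, hk⟩
      simp only [this]
      rw [hnorm ⟨k, hk⟩, Submodule.coe_norm]
    exact fun k => congrFun heq k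
  refine ⟨⟨T.toLinearMap, hTnorm⟩, ?_⟩
  intro i
  set g₀ : G := ⟨(s i, t i), Submodule.subset_span ⟨i, rfl⟩⟩ with hg₀
  set x₀ : S := ⟨s i, ⟨g₀, rfl⟩⟩ with hx₀
  have hx : T (s i) = f x₀ := hTS x₀
  have hsymm : e.symm x₀ = g₀ := by
    rw [LinearEquiv.symm_apply_eq]
    apply Subtype.ext
    rw [he, LinearEquiv.ofInjective_apply]
    rfl
  show T (s i) = t i
  rw [hx, hfval, hsymm]

theorem exists_unitary_aux (s : ι → K₁) (t : ι → K₂)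
    (hst : ∀ i j, ⟪s i, s j⟫_ℂ = ⟪t i, t j⟫_ℂ)
    (hd₁ : Dense (↑(Submodule.span ℂ (Set.range s)) : Set K₁))
    (hd₂ : Dense (↑(Submodule.span ℂ (Set.range t)) : Set K₂)) :
    ∃ V : K₁ ≃ₗᵢ[ℂ] K₂, ∀ i, V (s i) = t i := by
  obtain ⟨T, hT⟩ := exists_isometry_aux s t hst hd₁
  obtain ⟨T', hT'⟩ := exists_isometry_aux t s (fun i j => (hst i j).symm) hd₂
  have hcomp₁ : T'.toContinuousLinearMap.comp T.toContinuousLinearMap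
      = ContinuousLinearMap.id ℂ K₁ := by
    refine ContinuousLinearMap.ext_on hd₁ ?_
    rintro _ ⟨i, rfl⟩
    simp [hT, hT']
  have hcomp₂ : T.toContinuousLinearMap.comp T'.toContinuousLinearMap
      = ContinuousLinearMap.id ℂ K₂ := by
    refine ContinuousLinearMap.ext_on hd₂ ?_
    rintro _ ⟨i, rfl⟩
    simp [hT, hT']
  have h₁ : ∀ k, T' (T k) = k := fun k => DFunLike.congr_fun hcomp₁ k
  have h₂ : ∀ k, T (T' k) = k := fun k => DFunLike.congr_fun hcomp₂ k
  refine ⟨⟨⟨T.toLinearMap, ⇑T', h₁, h₂⟩, fun x => T.norm_map x⟩, fun i => hT i⟩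

end AuxUnitary

/-- Rieffel induction preserves unitary equivalence: if `(φ₁,H₁)` and
`(φ₂,H₂)` are unitarily equivalent (via `U`) non-degenerate representations of `B` and
`A` acts non-degenerately on the Hilbert `B`-module `E`, then `ξ ⊗ h ↦ ξ ⊗ Uh`
extends to a unitary intertwining the induced representations of `A`. -/
theorem statement6 (A : Type u) [Ring A] [StarRing A] [Algebra ℂ A] [UniformSpace A] [IsUniformAddGroup A]
    [IsTopologicalRing A] [ContinuousStar A] [ContinuousSMul ℂ A] [CompleteSpace A] [T2Space A] (hA : IsLocallyCStarAlgebra A)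
    (B : Type u) [Ring B] [StarRing B] [Algebra ℂ B] [UniformSpace B] [IsUniformAddGroup B]
    [IsTopologicalRing B] [ContinuousStar B] [ContinuousSMul ℂ B] [CompleteSpace B] [T2Space B] (hB : IsLocallyCStarAlgebra B)
    (E : Type u) [AddCommGroup E] [Module ℂ E] [UniformSpace E] [IsUniformAddGroup E] [ContinuousSMul ℂ E] (M : HilbertModule B E) (act : ModuleAction A M)
    (H₁ : Type u) [NormedAddCommGroup H₁] [InnerProductSpace ℂ H₁] [CompleteSpace H₁]
    (H₂ : Type u) [NormedAddCommGroup H₂] [InnerProductSpace ℂ H₂] [CompleteSpace H₂]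
    (φ₁ : RepOn B H₁) (hφ₁ : φ₁.Nondegenerate)
    (φ₂ : RepOn B H₂) (hφ₂ : φ₂.Nondegenerate)
    (U : H₁ ≃ₗᵢ[ℂ] H₂) (hU : ∀ b h, U (φ₁.toFun b h) = φ₂.toFun b (U h))
    (K₁ : Type u) [NormedAddCommGroup K₁] [InnerProductSpace ℂ K₁] [CompleteSpace K₁]
    (K₂ : Type u) [NormedAddCommGroup K₂] [InnerProductSpace ℂ K₂] [CompleteSpace K₂]
    (ind₁ : InducedSpace M.inner φ₁.toFun K₁) (ind₂ : InducedSpace M.inner φ₂.toFun K₂)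
    (ψ₁ : RepOn A K₁) (hψ₁ : IsInducedRep act.Φ ind₁ ψ₁)
    (ψ₂ : RepOn A K₂) (hψ₂ : IsInducedRep act.Φ ind₂ ψ₂) :
    ∃ V : K₁ ≃ₗᵢ[ℂ] K₂,
      (∀ ξ h, V (ind₁.ι ξ h) = ind₂.ι ξ (U h)) ∧
      ∀ a k, V (ψ₁.toFun a k) = ψ₂.toFun a (V k) := by
  classical
  -- the two spanning families
  set s : E × H₁ → K₁ := fun p => ind₁.ι p.1 p.2 with hs
  set t : E × H₁ → K₂ := fun p => ind₂.ι p.1 (U p.2) with ht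
  have hst : ∀ i j : E × H₁, ⟪s i, s j⟫_ℂ = ⟪t i, t j⟫_ℂ := by
    rintro ⟨ξ, h⟩ ⟨η, h'⟩
    rw [hs, ht]
    simp only
    rw [ind₁.inner_eq, ind₂.inner_eq, ← hU (M.inner ξ η) h', U.inner_map_map]
  have hr₁ : Set.range s = {k : K₁ | ∃ ξ h, k = ind₁.ι ξ h} := by
    ext k
    constructor
    · rintro ⟨⟨ξ, h⟩, rfl⟩; exact ⟨ξ, h, rfl⟩
    · rintro ⟨ξ, h, rfl⟩; exact ⟨(ξ, h), rfl⟩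
  have hr₂ : Set.range t = {k : K₂ | ∃ ξ h, k = ind₂.ι ξ h} := by
    ext k
    constructor
    · rintro ⟨⟨ξ, h⟩, rfl⟩; exact ⟨ξ, U h, rfl⟩
    · rintro ⟨ξ, h, rfl⟩
      exact ⟨(ξ, U.symm h), by simp [ht]⟩
  have hd₁ : Dense (↑(Submodule.span ℂ (Set.range s)) : Set K₁) := by
    rw [hr₁]; exact ind₁.dense
  have hd₂ : Dense (↑(Submodule.span ℂ (Set.range t)) : Set K₂) := by
    rw [hr₂]; exact ind₂.dense
  obtain ⟨V, hV⟩ := exists_unitary_aux s t hst hd₁ hd₂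
  have hVι : ∀ ξ h, V (ind₁.ι ξ h) = ind₂.ι ξ (U h) := fun ξ h => hV (ξ, h)
  refine ⟨V, hVι, ?_⟩
  intro a k
  set Vc : K₁ →L[ℂ] K₂ := V.toContinuousLinearEquiv.toContinuousLinearMap with hVc
  have hVck : ∀ k, Vc k = V k := fun _ => rfl
  have hcomp : Vc.comp (ψ₁.toFun a) = (ψ₂.toFun a).comp Vc := by
    refine ContinuousLinearMap.ext_on ind₁.dense ?_
    rintro _ ⟨ξ, h, rfl⟩
    simp only [ContinuousLinearMap.comp_apply, hVck]
    rw [hψ₁ a ξ h, hVι, hVι, hψ₂ a ξ (U h)]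
  have := DFunLike.congr_fun hcomp k
  simpa [hVck] using this
end
end

section
/- Let B be a locally C*-algebra, E a Hilbert B-module, (φ, H) a non-degenerate representation of B, and q a continuous C*-seminorm on B with associated factorization φ = φ_q ∘ π_q. Then the map ξ ⊗ h ↦ σ_q(ξ) ⊗ h extends to a unitary U : _EH → _{E_q}H satisfying U ∘ _Eφ(T) = (_{E_q}φ_q)((π_q)_*(T)) ∘ U for every adjointable T ∈ L_B(E); hence the representations (_Eφ, _EH) of L_B(E) and (_{E_q}φ_q ∘ (π_q)_*, _{E_q}H) are unitarily equivalent. -/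
noncomputable section

open Filter Topology Set
open scoped InnerProductSpace

universe u v w

set_option linter.unusedSectionVars false
section Aux
variable {ι : Type*} {K₁ K₂ : Type*}
  [NormedAddCommGroup K₁] [InnerProductSpace ℂ K₁] [CompleteSpace K₁]
  [NormedAddCommGroup K₂] [InnerProductSpace ℂ K₂] [CompleteSpace K₂]

lemma clm_eq_of_eqOn_dense {f : ι → K₁}
    (hdf : Dense (↑(Submodule.span ℂ (Set.range f)) : Set K₁))
    (A B : K₁ →L[ℂ] K₂) (h : ∀ i, A (f i) = B (f i)) : A = B := by
  have h0 : Set.EqOn A B (Set.range f) := by rintro x ⟨i, rfl⟩; exact h i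
  have h1 : Set.EqOn (⇑A) (⇑B) (↑(Submodule.span ℂ (Set.range f)) : Set K₁) :=
    fun x hx => LinearMap.eqOn_span h0 hx
  exact ContinuousLinearMap.ext fun x =>
    congrFun (Continuous.ext_on hdf A.continuous B.continuous h1) x

lemma exists_isometry {f : ι → K₁} {g : ι → K₂}
    (hfg : ∀ i j, ⟪f i, f j⟫_ℂ = ⟪g i, g j⟫_ℂ)
    (hdf : Dense (↑(Submodule.span ℂ (Set.range f)) : Set K₁)) :
    ∃ V : K₁ →L[ℂ] K₂, (∀ i, V (f i) = g i) ∧ ∀ k, ‖V k‖ = ‖k‖ := by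
  classical
  set L₁ : (ι →₀ ℂ) →ₗ[ℂ] K₁ := Finsupp.linearCombination ℂ f with hL₁
  set L₂ : (ι →₀ ℂ) →ₗ[ℂ] K₂ := Finsupp.linearCombination ℂ g with hL₂
  have hsingle₁ : ∀ i (c : ℂ), L₁ (Finsupp.single i c) = c • f i := by
    intro i c; simp [hL₁]
  have hsingle₂ : ∀ i (c : ℂ), L₂ (Finsupp.single i c) = c • g i := by
    intro i c; simp [hL₂]
  have hinner : ∀ x y, ⟪L₁ x, L₁ y⟫_ℂ = ⟪L₂ x, L₂ y⟫_ℂ := by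
    intro x y
    induction x using Finsupp.induction_linear with
    | zero => simp
    | add a b ha hb => simp [map_add, inner_add_left, ha, hb]
    | single i c =>
      induction y using Finsupp.induction_linear with
      | zero => simp
      | add a b ha hb => simp [map_add, inner_add_right, ha, hb]
      | single j d =>
        rw [hsingle₁, hsingle₁, hsingle₂, hsingle₂, inner_smul_left, inner_smul_left,
          inner_smul_right, inner_smul_right, hfg]
  have hnorm : ∀ x, ‖L₁ x‖ = ‖L₂ x‖ := by
    intro x
    rw [@norm_eq_sqrt_re_inner ℂ, @norm_eq_sqrt_re_inner ℂ, hinner]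
  have hker : LinearMap.ker L₁ ≤ LinearMap.ker L₂ := by
    intro x hx
    rw [LinearMap.mem_ker] at hx ⊢
    have := hnorm x
    rw [hx, norm_zero] at this
    exact norm_eq_zero.mp this.symm
  set J : (LinearMap.range L₁) →ₗ[ℂ] K₂ :=
    ((LinearMap.ker L₁).liftQ L₂ hker).comp
      (L₁.quotKerEquivRange.symm.toLinearMap) with hJ
  have hJapp : ∀ (x : ι →₀ ℂ) (hm : L₁ x ∈ LinearMap.range L₁), J ⟨L₁ x, hm⟩ = L₂ x := by
    intro x hm
    have h1 : L₁.quotKerEquivRange.symm ⟨L₁ x, hm⟩ = Submodule.Quotient.mk x := by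
      rw [LinearEquiv.symm_apply_eq]
      exact Subtype.ext (L₁.quotKerEquivRange_apply_mk x)
    simp [hJ, h1]
  have hJnorm : ∀ v : LinearMap.range L₁, ‖J v‖ = ‖v‖ := by
    rintro ⟨v, hv⟩
    obtain ⟨x, rfl⟩ := hv
    rw [hJapp x ⟨x, rfl⟩, ← hnorm]
    rfl
  set JI : (LinearMap.range L₁) →ₗᵢ[ℂ] K₂ := ⟨J, hJnorm⟩ with hJI
  set e : (LinearMap.range L₁) →L[ℂ] K₁ := (LinearMap.range L₁).subtypeL with he
  have hdr : DenseRange ⇑e := by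
    have : Set.range ⇑e = (↑(LinearMap.range L₁) : Set K₁) := Subtype.range_coe
    rw [DenseRange, this, Finsupp.range_linearCombination]
    exact hdf
  have hui : IsUniformInducing ⇑e := isometry_subtype_coe.isUniformInducing
  set V : K₁ →L[ℂ] K₂ := JI.toContinuousLinearMap.extend e with hV
  have hVe : ∀ v : LinearMap.range L₁, V v = J v := fun v =>
    ContinuousLinearMap.extend_eq _ hdr hui v
  have hVf : ∀ i, V (f i) = g i := by
    intro i
    have hm : f i ∈ LinearMap.range L₁ := ⟨Finsupp.single i 1, by simp [hsingle₁]⟩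
    have : V (f i) = J ⟨f i, hm⟩ := hVe ⟨f i, hm⟩
    rw [this]
    have h2 : (⟨f i, hm⟩ : LinearMap.range L₁) = ⟨L₁ (Finsupp.single i 1), LinearMap.mem_range_self L₁ _⟩ :=
      Subtype.ext (by simp [hsingle₁])
    rw [h2, hJapp, hsingle₂, one_smul]
  refine ⟨V, hVf, ?_⟩
  have heq : (fun k => ‖V k‖) = fun k => ‖k‖ := by
    refine Continuous.ext_on (s := (↑(Submodule.span ℂ (Set.range f)) : Set K₁)) hdf
      (continuous_norm.comp V.continuous) continuous_norm ?_
    intro k hk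
    have hk' : k ∈ LinearMap.range L₁ := by
      rw [Finsupp.range_linearCombination]; exact hk
    have : V k = J ⟨k, hk'⟩ := hVe ⟨k, hk'⟩
    simp only [this]
    exact hJnorm ⟨k, hk'⟩
  exact fun k => congrFun heq k

lemma exists_unitary {f : ι → K₁} {g : ι → K₂}
    (hfg : ∀ i j, ⟪f i, f j⟫_ℂ = ⟪g i, g j⟫_ℂ)
    (hdf : Dense (↑(Submodule.span ℂ (Set.range f)) : Set K₁))
    (hdg : Dense (↑(Submodule.span ℂ (Set.range g)) : Set K₂)) :
    ∃ U : K₁ ≃ₗᵢ[ℂ] K₂, ∀ i, U (f i) = g i := by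
  obtain ⟨V, hVf, hVn⟩ := exists_isometry hfg hdf
  obtain ⟨W, hWg, hWn⟩ := exists_isometry (fun i j => (hfg i j).symm) hdg
  have hWV : W.comp V = ContinuousLinearMap.id ℂ K₁ :=
    clm_eq_of_eqOn_dense hdf _ _ (fun i => by simp [hVf, hWg])
  have hVW : V.comp W = ContinuousLinearMap.id ℂ K₂ :=
    clm_eq_of_eqOn_dense hdg _ _ (fun i => by simp [hVf, hWg])
  have h1 : V.toLinearMap.comp W.toLinearMap = LinearMap.id := by
    ext x
    have := congrArg (fun (u : K₂ →L[ℂ] K₂) => u x) hVW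
    simpa using this
  have h2 : W.toLinearMap.comp V.toLinearMap = LinearMap.id := by
    ext x
    have := congrArg (fun (u : K₁ →L[ℂ] K₁) => u x) hWV
    simpa using this
  refine ⟨⟨LinearEquiv.ofLinear V.toLinearMap W.toLinearMap h1 h2, hVn⟩, fun i => hVf i⟩

end Aux

/-- For a Hilbert module `E` over a locally C*-algebra `B`, a
non-degenerate representation `φ = φ_q ∘ π_q` of `B`, the map `ξ ⊗ h ↦ σ_q(ξ) ⊗ h`
extends to a unitary `U : _EH → _{E_q}H` intertwining `_Eφ(T)` with
`_{E_q}φ_q((π_q)_*(T))` for every adjointable `T`. -/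
theorem statement8 (B : Type u) [Ring B] [StarRing B] [Algebra ℂ B] [UniformSpace B] [IsUniformAddGroup B]
    [IsTopologicalRing B] [ContinuousStar B] [ContinuousSMul ℂ B] [CompleteSpace B] [T2Space B] (hB : IsLocallyCStarAlgebra B)
    (E : Type u) [AddCommGroup E] [Module ℂ E] [UniformSpace E] [IsUniformAddGroup E]
    [ContinuousSMul ℂ E]
    (M : HilbertModule B E)
    (H : Type u) [NormedAddCommGroup H] [InnerProductSpace ℂ H] [CompleteSpace H]
    (φ : RepOn B H) (hφ : φ.Nondegenerate)
    (q : CStarSeminorm B)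
    (Bq : Type u) [NormedRing Bq] [StarRing Bq] [CStarRing Bq] [NormedAlgebra ℂ Bq] [StarModule ℂ Bq] [CompleteSpace Bq] (Q : CStarQuotient B q Bq)
    (φq : RepOn Bq H) (hfac : ∀ b, φq.toFun (Q.π b) = φ.toFun b)
    (Eq' : Type u) [NormedAddCommGroup Eq'] [NormedSpace ℂ Eq']
    (Mq : HilbertCStarModule Bq Eq') (R : ModuleQuotient M q Q Mq)
    (K₁ : Type u) [NormedAddCommGroup K₁] [InnerProductSpace ℂ K₁] [CompleteSpace K₁]
    (K₂ : Type u) [NormedAddCommGroup K₂] [InnerProductSpace ℂ K₂] [CompleteSpace K₂]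
    (indE : InducedSpace M.inner φ.toFun K₁)
    (indq : InducedSpace Mq.inner φq.toFun K₂) :
    ∃ U : K₁ ≃ₗᵢ[ℂ] K₂,
      (∀ ξ h, U (indE.ι ξ h) = indq.ι (R.σ ξ) h) ∧
      ∀ T S : E → E, Adjointable M.inner T S →
        ∀ Tq : Eq' → Eq', (∀ ξ, Tq (R.σ ξ) = R.σ (T ξ)) →
        ∀ (TopE : K₁ →L[ℂ] K₁) (Topq : K₂ →L[ℂ] K₂),
          (∀ ξ h, TopE (indE.ι ξ h) = indE.ι (T ξ) h) →
          (∀ ζ h, Topq (indq.ι ζ h) = indq.ι (Tq ζ) h) →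
          ∀ k, U (TopE k) = Topq (U k) := by
    classical
  set f : E × H → K₁ := fun p => indE.ι p.1 p.2 with hf
  set g : E × H → K₂ := fun p => indq.ι (R.σ p.1) p.2 with hg
  have hfg : ∀ p p' : E × H, ⟪f p, f p'⟫_ℂ = ⟪g p, g p'⟫_ℂ := by
    intro p p'
    simp only [hf, hg]
    rw [indE.inner_eq, indq.inner_eq, R.inner_eq, hfac]
  have hdf : Dense (↑(Submodule.span ℂ (Set.range f)) : Set K₁) := by
    have hr : Set.range f = {k : K₁ | ∃ ξ h, k = indE.ι ξ h} := by
      ext k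
      constructor
      · rintro ⟨⟨ξ, h⟩, rfl⟩; exact ⟨ξ, h, rfl⟩
      · rintro ⟨ξ, h, rfl⟩; exact ⟨(ξ, h), rfl⟩
    rw [hr]; exact indE.dense
  have hdg : Dense (↑(Submodule.span ℂ (Set.range g)) : Set K₂) := by
    have hr : Set.range g = {k : K₂ | ∃ ζ h, k = indq.ι ζ h} := by
      ext k
      constructor
      · rintro ⟨⟨ξ, h⟩, rfl⟩; exact ⟨R.σ ξ, h, rfl⟩
      · rintro ⟨ζ, h, rfl⟩
        obtain ⟨ξ, rfl⟩ := R.surj ζ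
        exact ⟨(ξ, h), rfl⟩
    rw [hr]; exact indq.dense
  obtain ⟨U, hU⟩ := exists_unitary hfg hdf hdg
  refine ⟨U, fun ξ h => hU (ξ, h), ?_⟩
  intro T S hTS Tq hTq TopE Topq hTopE hTopq k
  set Ucl : K₁ →L[ℂ] K₂ := U.toLinearIsometry.toContinuousLinearMap with hUcl
  have hUclApp : ∀ x, Ucl x = U x := fun x => rfl
  have key : Ucl.comp TopE = Topq.comp Ucl := by
    apply clm_eq_of_eqOn_dense hdf
    rintro ⟨ξ, h⟩
    show Ucl (TopE (indE.ι ξ h)) = Topq (Ucl (indE.ι ξ h))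
    rw [hTopE, hUclApp, hUclApp, hU (T ξ, h), hU (ξ, h)]
    show indq.ι (R.σ (T ξ)) h = Topq (indq.ι (R.σ ξ) h)
    rw [hTopq, hTq]
  have := congrArg (fun (u : K₁ →L[ℂ] K₂) => u k) key
  simpa [hUclApp] using this
end
end

section
/- Let A, B be locally C*-algebras, E a Hilbert B-module with non-degenerate continuous action of A, and let (φ, H) = (⊕_{i∈I} φ_i, ⊕_{i∈I} H_i) be a direct sum of non-degenerate representations of B. Then the induced representation (_E^Aφ, _EH) of A is unitarily equivalent to the direct sum (⊕_{i∈I} _E^Aφ_i, ⊕_{i∈I} _EH_i). -/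
noncomputable section

open Filter Topology Set
open scoped InnerProductSpace

universe u v w

/-- Rieffel induction commutes with direct sums: if
`(φ, H) = (⊕ᵢ φᵢ, ⊕ᵢ Hᵢ)` is a direct sum of non-degenerate representations of `B`,
then the induced representation `(_E^Aφ, _EH)` of `A` is unitarily equivalent to
`(⊕ᵢ _E^Aφᵢ, ⊕ᵢ _EHᵢ)`. -/
theorem statement10 (A : Type u) [Ring A] [StarRing A] [Algebra ℂ A] [UniformSpace A] [IsUniformAddGroup A]
    [IsTopologicalRing A] [ContinuousStar A] [ContinuousSMul ℂ A] [CompleteSpace A] [T2Space A] (hA : IsLocallyCStarAlgebra A)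
    (B : Type u) [Ring B] [StarRing B] [Algebra ℂ B] [UniformSpace B] [IsUniformAddGroup B]
    [IsTopologicalRing B] [ContinuousStar B] [ContinuousSMul ℂ B] [CompleteSpace B] [T2Space B] (hB : IsLocallyCStarAlgebra B)
    (E : Type u) [AddCommGroup E] [Module ℂ E] [UniformSpace E] [IsUniformAddGroup E]
    [ContinuousSMul ℂ E]
    (M : HilbertModule B E) (act : ModuleAction A M)
    (I : Type u) (H : I → Type u)
    [∀ i, NormedAddCommGroup (H i)] [∀ i, InnerProductSpace ℂ (H i)]
    [∀ i, CompleteSpace (H i)]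
    (φi : ∀ i, RepOn B (H i)) (hφi : ∀ i, (φi i).Nondegenerate)
    (φ : RepOn B (lp H 2)) (hφ : (φ : RepOn B (lp H 2)).Nondegenerate)
    (hsum : ∀ b (x : lp H 2) i, (φ.toFun b x : ∀ i, H i) i = (φi i).toFun b (x i))
    (Ki : I → Type u)
    [∀ i, NormedAddCommGroup (Ki i)] [∀ i, InnerProductSpace ℂ (Ki i)]
    [∀ i, CompleteSpace (Ki i)]
    (K : Type u) [NormedAddCommGroup K] [InnerProductSpace ℂ K] [CompleteSpace K]
    (ind : InducedSpace M.inner φ.toFun K)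
    (indi : ∀ i, InducedSpace M.inner (φi i).toFun (Ki i))
    (ψ : RepOn A K) (hψ : IsInducedRep act.Φ ind ψ)
    (ψi : ∀ i, RepOn A (Ki i)) (hψi : ∀ i, IsInducedRep act.Φ (indi i) (ψi i)) :
    ∃ U : K ≃ₗᵢ[ℂ] lp Ki 2,
      (∀ ξ (h : lp H 2) i, (U (ind.ι ξ h) : ∀ i, Ki i) i = (indi i).ι ξ (h i)) ∧
      ∀ a k i, (U (ψ.toFun a k) : ∀ i, Ki i) i = (ψi i).toFun a ((U k : ∀ i, Ki i) i) := by

  classical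
  have hι0 : ∀ (i : I) (ξ : E), (indi i).ι ξ 0 = 0 := by
    intro i ξ
    have h1 : ⟪(indi i).ι ξ 0, (indi i).ι ξ 0⟫_ℂ = 0 := by
      rw [(indi i).inner_eq]; simp
    exact inner_self_eq_zero.mp h1
  have hmem : ∀ (ξ : E) (x : lp H 2), Memℓp (fun i => (indi i).ι ξ (x i)) 2 := by
    intro ξ x
    have hs : HasSum (fun i => ⟪x i, (φ.toFun (M.inner ξ ξ) x) i⟫_ℂ)
        ⟪x, φ.toFun (M.inner ξ ξ) x⟫_ℂ := lp.hasSum_inner x _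
    have hsum2 : Summable fun i => ((‖(indi i).ι ξ (x i)‖ : ℂ)) ^ 2 := by
      refine hs.summable.congr fun i => ?_
      rw [hsum, ← (indi i).inner_eq, inner_self_eq_norm_sq_to_K]
      norm_cast
    have hre : Summable fun i => ‖(indi i).ι ξ (x i)‖ ^ 2 := by
      rw [← Complex.summable_ofReal]
      refine hsum2.congr fun i => ?_
      push_cast; ring
    apply memℓp_gen
    have h2 : ((2 : ENNReal)).toReal = ((2 : ℕ) : ℝ) := by norm_num
    rw [h2]
    refine hre.congr fun i => ?_
    rw [Real.rpow_natCast]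
  set D := E × lp H 2 with hD
  set g : D → lp Ki 2 := fun d => ⟨fun i => (indi i).ι d.1 (d.2 i), hmem d.1 d.2⟩ with hg
  set f : D → K := fun d => ind.ι d.1 d.2 with hfdef
  have hgapp : ∀ (d : D) (i : I), (g d : ∀ i, Ki i) i = (indi i).ι d.1 (d.2 i) :=
    fun d i => rfl
  have key : ∀ d e : D, ⟪g d, g e⟫_ℂ = ⟪f d, f e⟫_ℂ := by
    rintro ⟨ξ, x⟩ ⟨η, y⟩
    have hs : HasSum (fun i => ⟪x i, (φ.toFun (M.inner ξ η) y) i⟫_ℂ)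
        ⟪x, φ.toFun (M.inner ξ η) y⟫_ℂ := lp.hasSum_inner x _
    have hterm : ∀ i, ⟪(g (ξ, x) : ∀ i, Ki i) i, (g (η, y) : ∀ i, Ki i) i⟫_ℂ
        = ⟪x i, (φ.toFun (M.inner ξ η) y) i⟫_ℂ := by
      intro i; rw [hgapp, hgapp, (indi i).inner_eq, hsum]
    rw [lp.inner_eq_tsum, tsum_congr hterm, hs.tsum_eq]
    exact (ind.inner_eq ξ η x y).symm
  set L : (D →₀ ℂ) →ₗ[ℂ] K := Finsupp.linearCombination ℂ f with hL
  set L' : (D →₀ ℂ) →ₗ[ℂ] lp Ki 2 := Finsupp.linearCombination ℂ g with hL'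
  have hLL' : ∀ x y : D →₀ ℂ, ⟪L' x, L' y⟫_ℂ = ⟪L x, L y⟫_ℂ := by
    intro x y
    rw [hL, hL', Finsupp.linearCombination_apply, Finsupp.linearCombination_apply,
      Finsupp.linearCombination_apply, Finsupp.linearCombination_apply,
      Finsupp.sum, Finsupp.sum, Finsupp.sum, Finsupp.sum, sum_inner, sum_inner]
    refine Finset.sum_congr rfl fun d _ => ?_
    rw [inner_sum, inner_sum]
    refine Finset.sum_congr rfl fun e _ => ?_
    rw [inner_smul_left, inner_smul_left, inner_smul_right, inner_smul_right, key]
  have hnormL : ∀ x : D →₀ ℂ, ‖L' x‖ = ‖L x‖ := by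
    intro x
    have h3 : ‖L' x‖ ^ 2 = ‖L x‖ ^ 2 := by
      rw [← inner_self_eq_norm_sq (𝕜 := ℂ), ← inner_self_eq_norm_sq (𝕜 := ℂ), hLL']
    rw [← Real.sqrt_sq (norm_nonneg (L' x)), ← Real.sqrt_sq (norm_nonneg (L x)), h3]
  have hker : ∀ x y : D →₀ ℂ, L x = L y → L' x = L' y := by
    intro x y hxy
    have h1 : ‖L' x - L' y‖ = 0 := by
      rw [← map_sub, hnormL, map_sub, hxy, sub_self, norm_zero]
    rw [← sub_eq_zero]
    exact norm_eq_zero.mp h1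
  set S : Submodule ℂ K := LinearMap.range L with hS
  have hSdense : Dense (S : Set K) := by
    have h1 : Set.range f = {k : K | ∃ ξ h, k = ind.ι ξ h} := by
      ext k
      constructor
      · rintro ⟨⟨ξ, x⟩, hk⟩; exact ⟨ξ, x, hk.symm⟩
      · rintro ⟨ξ, x, hk⟩; exact ⟨(ξ, x), hk.symm⟩
    rw [hS, Finsupp.range_linearCombination, h1]
    exact ind.dense
  have hT0 : ∀ s : S, ∃ x : D →₀ ℂ, L x = (s : K) := fun s => s.2
  set T0 : S → lp Ki 2 := fun s => L' (hT0 s).choose with hT0def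
  have hT0spec : ∀ (s : S) (x : D →₀ ℂ), L x = (s : K) → T0 s = L' x := by
    intro s x hx
    exact hker _ _ (by rw [(hT0 s).choose_spec, ← hx])
  set T : S →ₗ[ℂ] lp Ki 2 :=
    { toFun := T0
      map_add' := by
        intro s t
        show T0 (s + t) = T0 s + T0 t
        rw [hT0spec (s + t) ((hT0 s).choose + (hT0 t).choose)
          (by rw [map_add, (hT0 s).choose_spec, (hT0 t).choose_spec]; rfl), map_add]
      map_smul' := by
        intro c s
        show T0 (c • s) = c • T0 s
        rw [hT0spec (c • s) (c • (hT0 s).choose)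
          (by rw [map_smul, (hT0 s).choose_spec]; rfl), map_smul] } with hT
  have hTnorm : ∀ s : S, ‖T s‖ = ‖s‖ := by
    intro s
    show ‖T0 s‖ = ‖s‖
    rw [hT0def]
    simp only []
    rw [hnormL, (hT0 s).choose_spec]
    rfl
  set Tiso : S →ₗᵢ[ℂ] lp Ki 2 := ⟨T, hTnorm⟩ with hTiso
  have hdr : DenseRange (S.subtypeL : S → K) := by
    have h1 : Set.range (S.subtypeL : S → K) = (S : Set K) := Subtype.range_coe
    rw [DenseRange, h1]; exact hSdense
  have hui : IsUniformInducing (S.subtypeL : S → K) :=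
    isometry_subtype_coe.isUniformInducing
  set Uclm : K →L[ℂ] lp Ki 2 :=
    ContinuousLinearMap.extend Tiso.toContinuousLinearMap S.subtypeL with hUclm
  have hUS : ∀ s : S, Uclm (s : K) = T s := by
    intro s
    exact ContinuousLinearMap.extend_eq Tiso.toContinuousLinearMap hdr hui s
  have hUL : ∀ x : D →₀ ℂ, Uclm (L x) = L' x := by
    intro x
    have hmemS : L x ∈ S := LinearMap.mem_range_self L x
    rw [hUS ⟨L x, hmemS⟩]
    exact hT0spec ⟨L x, hmemS⟩ x rfl
  have hUg : ∀ d : D, Uclm (f d) = g d := by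
    intro d
    have h1 : L (Finsupp.single d 1) = f d := by
      rw [hL, Finsupp.linearCombination_single, one_smul]
    have h2 : L' (Finsupp.single d 1) = g d := by
      rw [hL', Finsupp.linearCombination_single, one_smul]
    rw [← h1, hUL, h2]
  have hUnorm : ∀ k : K, ‖Uclm k‖ = ‖k‖ := by
    have heq : Set.EqOn (fun k => ‖Uclm k‖) (fun k => ‖k‖) (S : Set K) := by
      intro k hk
      show ‖Uclm k‖ = ‖k‖
      rw [hUS ⟨k, hk⟩, hTnorm]
      rfl
    have h2 := Continuous.ext_on hSdense (continuous_norm.comp Uclm.continuous)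
      continuous_norm heq
    exact fun k => congrFun h2 k
  set Uli : K →ₗᵢ[ℂ] lp Ki 2 := ⟨Uclm.toLinearMap, hUnorm⟩ with hUli
  have hrange_sub : ∀ d : D, g d ∈ LinearMap.range Uli.toLinearMap := fun d => ⟨f d, hUg d⟩
  set C : Submodule ℂ (lp Ki 2) :=
    (LinearMap.range Uli.toLinearMap).topologicalClosure with hC
  have hCclosed : IsClosed (C : Set (lp Ki 2)) :=
    (LinearMap.range Uli.toLinearMap).isClosed_topologicalClosure
  have hsingle_norm : ∀ (i : I) (v : Ki i), ‖(lp.single 2 i v : lp Ki 2)‖ = ‖v‖ := by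
    intro i v
    have h := lp.norm_single (p := 2) (E := Ki) (by norm_num) i
      (((lp.single 2 i v : lp Ki 2) : ∀ j, Ki j) i)
    rwa [lp.single_apply_self] at h
  have hsingle_add : ∀ (i : I) (v w : Ki i),
      (lp.single 2 i (v + w) : lp Ki 2) = lp.single 2 i v + lp.single 2 i w := by
    intro i v w
    apply lp.ext
    funext j
    rw [lp.coeFn_add, Pi.add_apply]
    by_cases hj : j = i
    · subst hj; rw [lp.single_apply_self, lp.single_apply_self, lp.single_apply_self]
    · rw [lp.single_apply_ne 2 i _ hj, lp.single_apply_ne 2 i _ hj,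
        lp.single_apply_ne 2 i _ hj, add_zero]
  have hsingle_gen : ∀ (i : I) (ξ : E) (w : H i),
      (lp.single 2 i ((indi i).ι ξ w) : lp Ki 2) ∈ C := by
    intro i ξ w
    have h1 : (lp.single 2 i ((indi i).ι ξ w) : lp Ki 2) = g (ξ, lp.single 2 i w) := by
      apply lp.ext
      funext j
      by_cases hj : j = i
      · subst hj
        rw [hgapp, lp.single_apply_self, lp.single_apply_self]
      · rw [hgapp, lp.single_apply_ne 2 i _ hj, lp.single_apply_ne 2 i _ hj, hι0 j ξ]
    rw [h1]
    exact Submodule.le_topologicalClosure _ (hrange_sub _)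
  have hsingle : ∀ (i : I) (v : Ki i), (lp.single 2 i v : lp Ki 2) ∈ C := by
    intro i v
    set sglL : Ki i →ₗ[ℂ] lp Ki 2 :=
      { toFun := fun w => lp.single 2 i w
        map_add' := hsingle_add i
        map_smul' := fun c w => lp.single_smul 2 i c w } with hsglL
    have hcont : Continuous sglL := by
      refine (sglL.mkContinuous 1 fun w => ?_).continuous
      rw [one_mul]
      exact le_of_eq (hsingle_norm i w)
    have hv : v ∈ closure
        (↑(Submodule.span ℂ {k : Ki i | ∃ ξ w, k = (indi i).ι ξ w}) : Set (Ki i)) :=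
      (indi i).dense v
    have hmap : Submodule.map sglL
        (Submodule.span ℂ {k : Ki i | ∃ ξ w, k = (indi i).ι ξ w}) ≤ C := by
      rw [Submodule.map_le_iff_le_comap]
      apply Submodule.span_le.mpr
      rintro k ⟨ξ, w, rfl⟩
      exact hsingle_gen i ξ w
    have himg : sglL '' (↑(Submodule.span ℂ {k : Ki i | ∃ ξ w, k = (indi i).ι ξ w}) :
        Set (Ki i)) ⊆ (C : Set (lp Ki 2)) := by
      rintro _ ⟨k, hk, rfl⟩
      exact hmap ⟨k, hk, rfl⟩
    have h1 : sglL v ∈ closure (sglL '' (↑(Submodule.span ℂ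
        {k : Ki i | ∃ ξ w, k = (indi i).ι ξ w}) : Set (Ki i))) :=
      image_closure_subset_closure_image hcont ⟨v, hv, rfl⟩
    have h2 : sglL v ∈ closure (C : Set (lp Ki 2)) :=
      closure_mono himg h1
    rwa [hCclosed.closure_eq] at h2
  have htotal : ∀ F : lp Ki 2, F ∈ C := by
    intro F
    have hF : HasSum (fun i => (lp.single 2 i (F i) : lp Ki 2)) F :=
      lp.hasSum_single (by norm_num) F
    have hps : ∀ s : Finset I, ∑ i ∈ s, (lp.single 2 i (F i) : lp Ki 2) ∈ C :=
      fun s => Submodule.sum_mem C fun i _ => hsingle i (F i)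
    exact hCclosed.mem_of_tendsto hF (Filter.Eventually.of_forall hps)
  have hsurj : Function.Surjective Uli := by
    intro F
    have hclosed : IsClosed (Set.range Uli) := Uli.isometry.isClosedEmbedding.isClosed_range
    have hCle : (C : Set (lp Ki 2)) ⊆ closure (Set.range Uli) := by
      have h1 : (C : Set (lp Ki 2)) = closure (LinearMap.range Uli.toLinearMap :
          Set (lp Ki 2)) := rfl
      rw [h1]
      apply closure_mono
      rintro x ⟨k, hk⟩
      exact ⟨k, hk⟩
    have h2 : F ∈ closure (Set.range Uli) := hCle (htotal F)
    rwa [hclosed.closure_eq] at h2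
  set Ueq : K ≃ₗᵢ[ℂ] lp Ki 2 := LinearIsometryEquiv.ofSurjective Uli hsurj with hUeq
  have hUeqapp : ∀ k : K, Ueq k = Uclm k := fun k => rfl
  refine ⟨Ueq, ?_, ?_⟩
  · intro ξ x i
    have h1 : Ueq (ind.ι ξ x) = g (ξ, x) := by rw [hUeqapp]; exact hUg (ξ, x)
    rw [h1]
  · intro a k i
    have hb : ∀ x : lp Ki 2, ‖(x : ∀ j, Ki j) i‖ ≤ 1 * ‖x‖ := fun x => by
      rw [one_mul]
      exact lp.norm_apply_le_norm (p := 2) (E := Ki) (by norm_num) x i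
    set ev : lp Ki 2 →L[ℂ] Ki i := LinearMap.mkContinuous
      { toFun := fun x => (x : ∀ j, Ki j) i
        map_add' := fun x y => by
          show ((x + y : lp Ki 2) : ∀ j, Ki j) i = (x : ∀ j, Ki j) i + (y : ∀ j, Ki j) i
          rw [lp.coeFn_add]; rfl
        map_smul' := fun c x => by
          show ((c • x : lp Ki 2) : ∀ j, Ki j) i = c • (x : ∀ j, Ki j) i
          rw [lp.coeFn_smul]; rfl } 1 hb with hev
    have hevapp : ∀ x : lp Ki 2, ev x = (x : ∀ j, Ki j) i := fun x => rfl
    set F₁ : K →L[ℂ] Ki i := ev.comp (Uclm.comp (ψ.toFun a)) with hF₁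
    set F₂ : K →L[ℂ] Ki i := ((ψi i).toFun a).comp (ev.comp Uclm) with hF₂
    have hgen : Set.EqOn F₁ F₂ {k : K | ∃ ξ h, k = ind.ι ξ h} := by
      rintro _ ⟨ξ, x, rfl⟩
      show ev (Uclm (ψ.toFun a (ind.ι ξ x))) = (ψi i).toFun a (ev (Uclm (ind.ι ξ x)))
      rw [hψ a ξ x, hUg (act.Φ a ξ, x), hUg (ξ, x), hevapp, hevapp, hgapp, hgapp]
      exact (hψi i a ξ (x i)).symm
    have hspan : Set.EqOn F₁ F₂
        (↑(Submodule.span ℂ {k : K | ∃ ξ h, k = ind.ι ξ h}) : Set K) :=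
      fun k hk => LinearMap.eqOn_span hgen hk
    have hall : (F₁ : K → Ki i) = F₂ :=
      Continuous.ext_on ind.dense F₁.continuous F₂.continuous hspan
    exact congrFun hall k
end
end

section
/- (Induction in stages) Let A, B, C be locally C*-algebras, E a Hilbert B-module, F a Hilbert C-module, and Φ₁ : A → L_B(E), Φ₂ : B → L_C(F) non-degenerate continuous *-morphisms. Let G = E ⊗_{Φ₂} F be the inner tensor product, with A acting via (Φ₂)_* ∘ Φ₁. Then for every non-degenerate representation (φ, H) of C, the representation of A induced from φ via G is unitarily equivalent to the representation of A induced via E from the representation of B induced from φ via F: (_G^Aφ, _GH) ≅ (_E^A(_F^Bφ), _E(_FH)). -/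
noncomputable section

open Filter Topology Set
open scoped InnerProductSpace

universe u v w

section Aux

/-- Extension of an inner-product-preserving correspondence between spanning families
to a unitary. -/
lemma exists_unitary_of_inner_eq {X : Type*} {K1 K2 : Type*}
    [NormedAddCommGroup K1] [InnerProductSpace ℂ K1] [CompleteSpace K1]
    [NormedAddCommGroup K2] [InnerProductSpace ℂ K2] [CompleteSpace K2]
    (f : X → K1) (g : X → K2)
    (hfg : ∀ x y, ⟪f x, f y⟫_ℂ = ⟪g x, g y⟫_ℂ)
    (hf : Dense (↑(Submodule.span ℂ (Set.range f)) : Set K1))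
    (hg : Dense (↑(Submodule.span ℂ (Set.range g)) : Set K2)) :
    ∃ U : K1 ≃ₗᵢ[ℂ] K2, ∀ x, U (f x) = g x := by
  set Ff := Finsupp.linearCombination ℂ f with hFfdef
  set Fg := Finsupp.linearCombination ℂ g with hFgdef
  have hFF : ∀ v w, ⟪Ff v, Ff w⟫_ℂ = ⟪Fg v, Fg w⟫_ℂ := by
    intro v w
    simp only [hFfdef, hFgdef, Finsupp.linearCombination_apply, Finsupp.sum, sum_inner,
      inner_sum, inner_smul_left, inner_smul_right, hfg]
  have hnormF : ∀ v, ‖Ff v‖ = ‖Fg v‖ := by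
    intro v
    have h1 : (‖Ff v‖ : ℝ) ^ 2 = ‖Fg v‖ ^ 2 := by
      rw [norm_sq_eq_re_inner (𝕜 := ℂ), norm_sq_eq_re_inner (𝕜 := ℂ), hFF]
    nlinarith [norm_nonneg (Ff v), norm_nonneg (Fg v)]
  have hker : LinearMap.ker Ff = LinearMap.ker Fg := by
    ext v
    simp only [LinearMap.mem_ker]
    constructor <;> intro h
    · have := hnormF v; rw [h, norm_zero] at this; exact norm_eq_zero.mp this.symm
    · have := hnormF v; rw [h, norm_zero] at this; exact norm_eq_zero.mp this
  let e : ↥(LinearMap.range Ff) ≃ₗ[ℂ] ↥(LinearMap.range Fg) :=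
    Ff.quotKerEquivRange.symm.trans
      ((Submodule.quotEquivOfEq _ _ hker).trans Fg.quotKerEquivRange)
  have he : ∀ (z : ↥(LinearMap.range Ff)) (v : X →₀ ℂ), (z : K1) = Ff v →
      ((e z : ↥(LinearMap.range Fg)) : K2) = Fg v := by
    intro z v hz
    have hz' : z = Ff.quotKerEquivRange (Submodule.Quotient.mk v) := by
      apply Subtype.ext
      rw [hz, LinearMap.quotKerEquivRange_apply_mk]
    simp only [e, hz', LinearEquiv.trans_apply, LinearEquiv.symm_apply_apply,
      Submodule.quotEquivOfEq_mk, LinearMap.quotKerEquivRange_apply_mk]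
  let li : ↥(LinearMap.range Ff) →ₗᵢ[ℂ] K2 :=
    { toLinearMap := (LinearMap.range Fg).subtype.comp e.toLinearMap
      norm_map' := by
        rintro ⟨_, v, rfl⟩
        have := he ⟨Ff v, ⟨v, rfl⟩⟩ v rfl
        simp only [LinearMap.coe_comp, Function.comp_apply, Submodule.coe_subtype,
          LinearEquiv.coe_coe]
        rw [this]
        exact (hnormF v).symm }
  have hli : ∀ (z : ↥(LinearMap.range Ff)) (v : X →₀ ℂ), (z : K1) = Ff v → li z = Fg v := by
    intro z v hz
    exact he z v hz
  have hrange : (LinearMap.range Ff : Submodule ℂ K1) = Submodule.span ℂ (Set.range f) :=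
    Finsupp.range_linearCombination ℂ
  have hdense : DenseRange ⇑(LinearMap.range Ff).subtypeL := by
    have : Set.range ⇑(LinearMap.range Ff).subtypeL = ↑(LinearMap.range Ff) := by
      ext x; simp [Submodule.subtypeL]
    rw [DenseRange, this, hrange]
    exact hf
  have hui : IsUniformInducing ⇑(LinearMap.range Ff).subtypeL :=
    ((LinearMap.range Ff).subtypeₗᵢ.isometry).isUniformInducing
  let U0 : K1 →L[ℂ] K2 := li.toContinuousLinearMap.extend (LinearMap.range Ff).subtypeL
  have hU0 : ∀ z : ↥(LinearMap.range Ff), U0 (z : K1) = li z := fun z =>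
    li.toContinuousLinearMap.extend_eq hdense hui z
  have hU0f : ∀ x, U0 (f x) = g x := by
    intro x
    have hmem : f x ∈ LinearMap.range Ff :=
      ⟨Finsupp.single x 1, by simp [hFfdef, Finsupp.linearCombination_single]⟩
    have h1 : U0 (f x) = li ⟨f x, hmem⟩ := hU0 ⟨f x, hmem⟩
    rw [h1, hli ⟨f x, hmem⟩ (Finsupp.single x 1)
      (by simp [hFfdef, Finsupp.linearCombination_single])]
    simp [hFgdef, Finsupp.linearCombination_single]
  have hU0norm : ∀ k, ‖U0 k‖ = ‖k‖ := by
    have heq : (fun k => ‖U0 k‖) = fun k : K1 => ‖k‖ := by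
      apply Continuous.ext_on (hrange ▸ hf) (continuous_norm.comp U0.continuous) continuous_norm
      rintro k ⟨v, rfl⟩
      have h1 : U0 (Ff v) = li ⟨Ff v, ⟨v, rfl⟩⟩ := hU0 ⟨Ff v, ⟨v, rfl⟩⟩
      simp only [Function.comp_apply, h1, li.norm_map]; rfl
    exact fun k => congrFun heq k
  let Uli : K1 →ₗᵢ[ℂ] K2 := ⟨U0.toLinearMap, hU0norm⟩
  have hsurj : Function.Surjective ⇑Uli := by
    have hclosed : IsClosed (Set.range ⇑Uli) := Uli.isometry.isClosedEmbedding.isClosed_range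
    intro y
    have h1 : ↑(Submodule.span ℂ (Set.range g)) ⊆ Set.range ⇑Uli := by
      have h2 : Submodule.span ℂ (Set.range g) ≤ LinearMap.range Uli.toLinearMap := by
        rw [Submodule.span_le]
        rintro _ ⟨x, rfl⟩
        exact ⟨f x, hU0f x⟩
      intro z hz
      exact h2 hz
    have : y ∈ closure (Set.range ⇑Uli) := closure_mono h1 (hg y)
    rwa [hclosed.closure_eq] at this
  exact ⟨LinearIsometryEquiv.ofSurjective Uli hsurj, fun x => hU0f x⟩

/-- For a fixed vector `h`, the map `ξ ↦ ι ξ h` of an induced-space datum is a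
continuous linear map. -/
lemma induced_fst {C : Type*} [Ring C] [StarRing C] [Algebra ℂ C] [UniformSpace C]
    (hC : IsLocallyCStarAlgebra C)
    {G : Type*} [AddCommGroup G] [Module ℂ G] [UniformSpace G] [IsUniformAddGroup G]
    [ContinuousSMul ℂ G]
    (P : HilbertModule C G)
    {H : Type*} [NormedAddCommGroup H] [InnerProductSpace ℂ H] [CompleteSpace H]
    (φ : RepOn C H)
    {K : Type*} [NormedAddCommGroup K] [InnerProductSpace ℂ K] [CompleteSpace K]
    (ind : InducedSpace P.inner φ.toFun K) (h : H) :
    ∃ L : G →ₗ[ℂ] K, Continuous ⇑L ∧ ∀ x, L x = ind.ι x h := by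
  set Fc : G → G → ℂ := fun x y => ⟪h, φ.toFun (P.inner x y) h⟫_ℂ with hFcdef
  have hF : ∀ a b, ⟪ind.ι a h, ind.ι b h⟫_ℂ = Fc a b := fun a b => ind.inner_eq a b h h
  have hFadd_r : ∀ x y z, Fc x (y + z) = Fc x y + Fc x z := by
    intro x y z
    simp only [hFcdef, P.inner_add_right, φ.map_add, ContinuousLinearMap.add_apply,
      inner_add_right]
  have hFsmul_r : ∀ (c : ℂ) x y, Fc x (c • y) = c * Fc x y := by
    intro c x y
    simp only [hFcdef, P.inner_smulC, φ.map_smulC, ContinuousLinearMap.smul_apply,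
      inner_smul_right]
  have hconj : ∀ x y, Fc y x = starRingEnd ℂ (Fc x y) := by
    intro x y
    simp only [hFcdef]
    rw [← P.star_inner, φ.map_star, ContinuousLinearMap.adjoint_inner_right, inner_conj_symm]
  have hFadd_l : ∀ x y z, Fc (x + y) z = Fc x z + Fc y z := by
    intro x y z
    rw [hconj z, hconj z x, hconj z y, ← map_add]
    rw [hFadd_r]
  have hFsmul_l : ∀ (c : ℂ) x y, Fc (c • x) y = starRingEnd ℂ c * Fc x y := by
    intro c x y
    rw [hconj y, hFsmul_r, map_mul, ← hconj y]
  have hadd : ∀ x y, ind.ι (x + y) h = ind.ι x h + ind.ι y h := by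
    intro x y
    have key : ⟪ind.ι (x + y) h - (ind.ι x h + ind.ι y h),
        ind.ι (x + y) h - (ind.ι x h + ind.ι y h)⟫_ℂ = 0 := by
      simp only [inner_sub_left, inner_sub_right, inner_add_left, inner_add_right, hF,
        hFadd_l, hFadd_r]
      ring
    exact sub_eq_zero.mp (inner_self_eq_zero.mp key)
  have hsmul : ∀ (c : ℂ) x, ind.ι (c • x) h = c • ind.ι x h := by
    intro c x
    have key : ⟪ind.ι (c • x) h - c • ind.ι x h,
        ind.ι (c • x) h - c • ind.ι x h⟫_ℂ = 0 := by
      simp only [inner_sub_left, inner_sub_right, inner_smul_left, inner_smul_right, hF,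
        hFsmul_l, hFsmul_r]
      ring
    exact sub_eq_zero.mp (inner_self_eq_zero.mp key)
  refine ⟨{ toFun := fun x => ind.ι x h, map_add' := hadd, map_smul' := hsmul }, ?_, fun x => rfl⟩
  set L : G →ₗ[ℂ] K := { toFun := fun x => ind.ι x h, map_add' := hadd, map_smul' := hsmul }
  show Continuous ⇑L
  -- φ(0) = 0
  have hφ0 : φ.toFun 0 = 0 := by
    have h00 := φ.map_add 0 0
    rw [add_zero] at h00
    exact (left_eq_add.mp h00)
  -- seminorm convergence
  have hsemi : ∀ p : CStarSeminorm C,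
      Filter.Tendsto (fun x : G => p (P.inner x x)) (nhds 0) (nhds 0) := by
    intro p
    have h2 := (P.topology_eq (nhds 0)).mp tendsto_id p
    have h4 := h2.pow 2
    rw [show (0 : ℝ) ^ 2 = 0 by norm_num] at h4
    refine h4.congr fun x => ?_
    exact Real.sq_sqrt (p.nonneg' _)
  have hinner0 : Filter.Tendsto (fun x : G => P.inner x x) (nhds 0) (nhds 0) := by
    have h5 := (hC (Filter.map (fun x : G => P.inner x x) (nhds 0))).mpr (fun p => by
      rw [Filter.tendsto_map'_iff]; exact hsemi p)
    rwa [Filter.tendsto_map'_iff] at h5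
  have hφc : Filter.Tendsto (fun x : G => φ.toFun (P.inner x x)) (nhds 0)
      (nhds (0 : H →L[ℂ] H)) := by
    have := (φ.continuous.tendsto 0).comp hinner0
    rwa [hφ0] at this
  have hb : ∀ x : G, ‖L x‖ ≤ Real.sqrt ‖φ.toFun (P.inner x x)‖ * ‖h‖ := by
    intro x
    have h2 : ‖L x‖ ^ 2 ≤ ‖φ.toFun (P.inner x x)‖ * ‖h‖ ^ 2 := by
      rw [norm_sq_eq_re_inner (𝕜 := ℂ)]
      have hLx : ⟪L x, L x⟫_ℂ = ⟪h, φ.toFun (P.inner x x) h⟫_ℂ := hF x x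
      rw [hLx]
      calc RCLike.re ⟪h, φ.toFun (P.inner x x) h⟫_ℂ
          ≤ ‖⟪h, φ.toFun (P.inner x x) h⟫_ℂ‖ := RCLike.re_le_norm _
        _ ≤ ‖h‖ * ‖φ.toFun (P.inner x x) h‖ := norm_inner_le_norm _ _
        _ ≤ ‖h‖ * (‖φ.toFun (P.inner x x)‖ * ‖h‖) := by
            gcongr
            exact (φ.toFun (P.inner x x)).le_opNorm h
        _ = ‖φ.toFun (P.inner x x)‖ * ‖h‖ ^ 2 := by ring
    have h3 : ‖L x‖ ^ 2 ≤ (Real.sqrt ‖φ.toFun (P.inner x x)‖ * ‖h‖) ^ 2 := by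
      rw [mul_pow, Real.sq_sqrt (norm_nonneg _)]
      exact h2
    calc ‖L x‖ = Real.sqrt (‖L x‖ ^ 2) := (Real.sqrt_sq (norm_nonneg _)).symm
      _ ≤ Real.sqrt ((Real.sqrt ‖φ.toFun (P.inner x x)‖ * ‖h‖) ^ 2) := Real.sqrt_le_sqrt h3
      _ = Real.sqrt ‖φ.toFun (P.inner x x)‖ * ‖h‖ := Real.sqrt_sq (by positivity)
  have hnt : Filter.Tendsto (fun x : G => Real.sqrt ‖φ.toFun (P.inner x x)‖ * ‖h‖)
      (nhds 0) (nhds 0) := by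
    have h6 : Filter.Tendsto (fun x : G => ‖φ.toFun (P.inner x x)‖) (nhds 0) (nhds 0) := by
      simpa using hφc.norm
    have h7 := (Real.continuous_sqrt.tendsto 0).comp h6
    rw [Real.sqrt_zero] at h7
    simpa using h7.mul_const ‖h‖
  have hcont0 : ContinuousAt ⇑L 0 := by
    rw [ContinuousAt, map_zero]
    rw [tendsto_zero_iff_norm_tendsto_zero]
    exact squeeze_zero (fun x => norm_nonneg _) hb hnt
  exact continuous_of_continuousAt_zero L hcont0

/-- For a fixed `ξ`, the map `h ↦ ι ξ h` of an induced-space datum is a continuous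
linear map. -/
lemma induced_snd {B : Type*} {E : Type*}
    {H : Type*} [NormedAddCommGroup H] [InnerProductSpace ℂ H] [CompleteSpace H]
    {K : Type*} [NormedAddCommGroup K] [InnerProductSpace ℂ K] [CompleteSpace K]
    {innerE : E → E → B} {φ : B → H →L[ℂ] H}
    (ind : InducedSpace innerE φ K) (ξ : E) :
    ∃ L : H →L[ℂ] K, ∀ h, L h = ind.ι ξ h := by
  set T := φ (innerE ξ ξ) with hT
  have hF : ∀ h₁ h₂, ⟪ind.ι ξ h₁, ind.ι ξ h₂⟫_ℂ = ⟪h₁, T h₂⟫_ℂ :=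
    fun h₁ h₂ => ind.inner_eq ξ ξ h₁ h₂
  have hadd : ∀ h₁ h₂, ind.ι ξ (h₁ + h₂) = ind.ι ξ h₁ + ind.ι ξ h₂ := by
    intro h₁ h₂
    have key : ⟪ind.ι ξ (h₁ + h₂) - (ind.ι ξ h₁ + ind.ι ξ h₂),
        ind.ι ξ (h₁ + h₂) - (ind.ι ξ h₁ + ind.ι ξ h₂)⟫_ℂ = 0 := by
      simp only [inner_sub_left, inner_sub_right, inner_add_left, inner_add_right, hF,
        map_add]
      ring
    exact sub_eq_zero.mp (inner_self_eq_zero.mp key)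
  have hsmul : ∀ (c : ℂ) h₁, ind.ι ξ (c • h₁) = c • ind.ι ξ h₁ := by
    intro c h₁
    have key : ⟪ind.ι ξ (c • h₁) - c • ind.ι ξ h₁,
        ind.ι ξ (c • h₁) - c • ind.ι ξ h₁⟫_ℂ = 0 := by
      simp only [inner_sub_left, inner_sub_right, inner_smul_left, inner_smul_right, hF,
        map_smul]
      ring
    exact sub_eq_zero.mp (inner_self_eq_zero.mp key)
  set Ll : H →ₗ[ℂ] K := { toFun := fun h => ind.ι ξ h, map_add' := hadd, map_smul' := hsmul }
    with hLl
  have hb : ∀ h₁ : H, ‖Ll h₁‖ ≤ Real.sqrt ‖T‖ * ‖h₁‖ := by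
    intro h₁
    have h2 : ‖Ll h₁‖ ^ 2 ≤ ‖T‖ * ‖h₁‖ ^ 2 := by
      rw [norm_sq_eq_re_inner (𝕜 := ℂ)]
      have hLx : ⟪Ll h₁, Ll h₁⟫_ℂ = ⟪h₁, T h₁⟫_ℂ := hF h₁ h₁
      rw [hLx]
      calc RCLike.re ⟪h₁, T h₁⟫_ℂ ≤ ‖⟪h₁, T h₁⟫_ℂ‖ := RCLike.re_le_norm _
        _ ≤ ‖h₁‖ * ‖T h₁‖ := norm_inner_le_norm _ _
        _ ≤ ‖h₁‖ * (‖T‖ * ‖h₁‖) := by gcongr; exact T.le_opNorm h₁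
        _ = ‖T‖ * ‖h₁‖ ^ 2 := by ring
    have h3 : ‖Ll h₁‖ ^ 2 ≤ (Real.sqrt ‖T‖ * ‖h₁‖) ^ 2 := by
      rw [mul_pow, Real.sq_sqrt (norm_nonneg _)]
      exact h2
    calc ‖Ll h₁‖ = Real.sqrt (‖Ll h₁‖ ^ 2) := (Real.sqrt_sq (norm_nonneg _)).symm
      _ ≤ Real.sqrt ((Real.sqrt ‖T‖ * ‖h₁‖) ^ 2) := Real.sqrt_le_sqrt h3
      _ = Real.sqrt ‖T‖ * ‖h₁‖ := Real.sqrt_sq (by positivity)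
  exact ⟨Ll.mkContinuous (Real.sqrt ‖T‖) hb, fun h₁ => rfl⟩

end Aux

/-- **Induction in stages.** With `A` acting on the Hilbert `B`-module
`E`, `B` acting on the Hilbert `C`-module `F`, and `G = E ⊗_{Φ₂} F` the inner tensor
product with `A` acting via `(Φ₂)_* ∘ Φ₁`, for every non-degenerate representation
`(φ, H)` of `C` the representation of `A` induced via `G` is unitarily equivalent to
the one obtained by inducing first via `F` and then via `E`. -/
theorem statement11 (A : Type u) [Ring A] [StarRing A] [Algebra ℂ A] [UniformSpace A] [IsUniformAddGroup A]
    [IsTopologicalRing A] [ContinuousStar A] [ContinuousSMul ℂ A] [CompleteSpace A] [T2Space A] (hA : IsLocallyCStarAlgebra A)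
    (B : Type u) [Ring B] [StarRing B] [Algebra ℂ B] [UniformSpace B] [IsUniformAddGroup B]
    [IsTopologicalRing B] [ContinuousStar B] [ContinuousSMul ℂ B] [CompleteSpace B] [T2Space B] (hB : IsLocallyCStarAlgebra B)
    (C : Type u) [Ring C] [StarRing C] [Algebra ℂ C] [UniformSpace C] [IsUniformAddGroup C]
    [IsTopologicalRing C] [ContinuousStar C] [ContinuousSMul ℂ C] [CompleteSpace C] [T2Space C] (hC : IsLocallyCStarAlgebra C)
    (E : Type u) [AddCommGroup E] [Module ℂ E] [UniformSpace E] [IsUniformAddGroup E]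
    [ContinuousSMul ℂ E]
    (F : Type u) [AddCommGroup F] [Module ℂ F] [UniformSpace F] [IsUniformAddGroup F]
    [ContinuousSMul ℂ F]
    (M : HilbertModule B E) (N : HilbertModule C F)
    (act1 : ModuleAction A M) (act2 : ModuleAction B N)
    -- the inner tensor product G = E ⊗_{Φ₂} F
    (G : Type u) [AddCommGroup G] [Module ℂ G] [UniformSpace G] [IsUniformAddGroup G]
    [ContinuousSMul ℂ G]
    (P : HilbertModule C G) (τ : E → F → G)
    (hτ_inner : ∀ ξ₁ η₁ ξ₂ η₂,
      P.inner (τ ξ₁ η₁) (τ ξ₂ η₂) = N.inner η₁ (act2.Φ (M.inner ξ₁ ξ₂) η₂))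
    (hτ_dense : Dense (↑(Submodule.span ℂ {x : G | ∃ ξ η, x = τ ξ η}) : Set G))
    -- A acts on G via (Φ₂)_* ∘ Φ₁
    (actG : ModuleAction A P)
    (hactG : ∀ a ξ η, actG.Φ a (τ ξ η) = τ (act1.Φ a ξ) η)
    -- a non-degenerate representation of C
    (H : Type u) [NormedAddCommGroup H] [InnerProductSpace ℂ H] [CompleteSpace H]
    (φ : RepOn C H) (hφ : φ.Nondegenerate)
    -- induction via G
    (KG : Type u) [NormedAddCommGroup KG] [InnerProductSpace ℂ KG] [CompleteSpace KG]
    (indG : InducedSpace P.inner φ.toFun KG)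
    (ψG : RepOn A KG) (hψG : IsInducedRep actG.Φ indG ψG)
    -- induction via F, giving a representation of B
    (KF : Type u) [NormedAddCommGroup KF] [InnerProductSpace ℂ KF] [CompleteSpace KF]
    (indF : InducedSpace N.inner φ.toFun KF)
    (ψF : RepOn B KF) (hψF : IsInducedRep act2.Φ indF ψF) (hψFnd : ψF.Nondegenerate)
    -- then induction via E from (ψF, KF)
    (K2 : Type u) [NormedAddCommGroup K2] [InnerProductSpace ℂ K2] [CompleteSpace K2]
    (ind2 : InducedSpace M.inner ψF.toFun K2)
    (ψ2 : RepOn A K2) (hψ2 : IsInducedRep act1.Φ ind2 ψ2) :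
    UnitarilyEquiv ψG ψ2 := by
  classical
  set f : E × F × H → KG := fun x => indG.ι (τ x.1 x.2.1) x.2.2 with hfdef
  set g : E × F × H → K2 := fun x => ind2.ι x.1 (indF.ι x.2.1 x.2.2) with hgdef
  have hfg : ∀ x y, ⟪f x, f y⟫_ℂ = ⟪g x, g y⟫_ℂ := by
    rintro ⟨ξ₁, η₁, h₁⟩ ⟨ξ₂, η₂, h₂⟩
    simp only [hfdef, hgdef]
    rw [indG.inner_eq, hτ_inner, ind2.inner_eq, hψF, indF.inner_eq]
  have hDf : Dense (↑(Submodule.span ℂ (Set.range f)) : Set KG) := by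
    have hsub : {k : KG | ∃ x h, k = indG.ι x h} ⊆
        ((Submodule.span ℂ (Set.range f)).topologicalClosure : Set KG) := by
      rintro k ⟨x, h, rfl⟩
      obtain ⟨L, hLc, hL⟩ := induced_fst hC P φ indG h
      have hx : x ∈ closure (↑(Submodule.span ℂ {x : G | ∃ ξ η, x = τ ξ η}) : Set G) :=
        hτ_dense x
      have himg : L '' (↑(Submodule.span ℂ {x : G | ∃ ξ η, x = τ ξ η}) : Set G) ⊆
          ↑(Submodule.span ℂ (Set.range f)) := by
        rintro _ ⟨y, hy, rfl⟩
        have h1 : Submodule.span ℂ {x : G | ∃ ξ η, x = τ ξ η} ≤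
            (Submodule.span ℂ (Set.range f)).comap L := by
          rw [Submodule.span_le]
          rintro _ ⟨ξ, η, rfl⟩
          simp only [Set.mem_preimage, SetLike.mem_coe, Submodule.mem_comap]
          apply Submodule.subset_span
          exact ⟨(ξ, η, h), (hL (τ ξ η)).symm⟩
        exact h1 hy
      have h2 : L x ∈ closure (↑(Submodule.span ℂ (Set.range f)) : Set KG) := by
        have h3 := image_closure_subset_closure_image (s :=
          (↑(Submodule.span ℂ {x : G | ∃ ξ η, x = τ ξ η}) : Set G)) hLc
        exact closure_mono himg (h3 ⟨x, hx, rfl⟩)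
      rw [← hL x]
      rwa [SetLike.mem_coe, ← Submodule.mem_toAddSubmonoid,
        ← Submodule.topologicalClosure_coe] at *
    have h5 : Submodule.span ℂ {k : KG | ∃ x h, k = indG.ι x h} ≤
        (Submodule.span ℂ (Set.range f)).topologicalClosure := Submodule.span_le.mpr hsub
    have h6 : Dense (↑((Submodule.span ℂ (Set.range f)).topologicalClosure) : Set KG) :=
      Dense.mono h5 indG.dense
    rw [Submodule.topologicalClosure_coe] at h6
    exact h6.of_closure
  have hDg : Dense (↑(Submodule.span ℂ (Set.range g)) : Set K2) := by
    have hsub : {k : K2 | ∃ ξ k', k = ind2.ι ξ k'} ⊆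
        ((Submodule.span ℂ (Set.range g)).topologicalClosure : Set K2) := by
      rintro k ⟨ξ, k', rfl⟩
      obtain ⟨L, hL⟩ := induced_snd ind2 ξ
      have hx : k' ∈ closure (↑(Submodule.span ℂ {k : KF | ∃ η h, k = indF.ι η h}) : Set KF) :=
        indF.dense k'
      have himg : ⇑L '' (↑(Submodule.span ℂ {k : KF | ∃ η h, k = indF.ι η h}) : Set KF) ⊆
          ↑(Submodule.span ℂ (Set.range g)) := by
        rintro _ ⟨y, hy, rfl⟩
        have h1 : Submodule.span ℂ {k : KF | ∃ η h, k = indF.ι η h} ≤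
            (Submodule.span ℂ (Set.range g)).comap (L : KF →ₗ[ℂ] K2) := by
          rw [Submodule.span_le]
          rintro _ ⟨η, h, rfl⟩
          simp only [Set.mem_preimage, SetLike.mem_coe, Submodule.mem_comap,
            ContinuousLinearMap.coe_coe]
          apply Submodule.subset_span
          exact ⟨(ξ, η, h), (hL (indF.ι η h)).symm⟩
        exact h1 hy
      have h2 : L k' ∈ closure (↑(Submodule.span ℂ (Set.range g)) : Set K2) := by
        have h3 := image_closure_subset_closure_image (s :=
          (↑(Submodule.span ℂ {k : KF | ∃ η h, k = indF.ι η h}) : Set KF)) L.continuous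
        exact closure_mono himg (h3 ⟨k', hx, rfl⟩)
      rw [← hL k']
      rwa [SetLike.mem_coe, ← Submodule.mem_toAddSubmonoid,
        ← Submodule.topologicalClosure_coe] at *
    have h5 : Submodule.span ℂ {k : K2 | ∃ ξ k', k = ind2.ι ξ k'} ≤
        (Submodule.span ℂ (Set.range g)).topologicalClosure := Submodule.span_le.mpr hsub
    have h6 : Dense (↑((Submodule.span ℂ (Set.range g)).topologicalClosure) : Set K2) :=
      Dense.mono h5 ind2.dense
    rw [Submodule.topologicalClosure_coe] at h6
    exact h6.of_closure
  obtain ⟨U, hU⟩ := exists_unitary_of_inner_eq f g hfg hDf hDg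
  refine ⟨U, fun a k => ?_⟩
  have hgen : ∀ x : E × F × H, U (ψG.toFun a (f x)) = ψ2.toFun a (U (f x)) := by
    rintro ⟨ξ, η, h⟩
    have h1 : ψG.toFun a (f (ξ, η, h)) = f (act1.Φ a ξ, η, h) := by
      simp only [hfdef]
      rw [hψG, hactG]
    rw [h1, hU, hU]
    simp only [hgdef]
    rw [hψ2]
  -- extend to the span by linearity, then to all of KG by continuity
  let D1 : KG →ₗ[ℂ] K2 :=
    ((ψ2.toFun a : K2 →ₗ[ℂ] K2).comp U.toLinearEquiv.toLinearMap)
  let D2 : KG →ₗ[ℂ] K2 :=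
    (U.toLinearEquiv.toLinearMap.comp (ψG.toFun a : KG →ₗ[ℂ] KG))
  have hD12 : Set.EqOn ⇑D2 ⇑D1 (Set.range f) := by
    rintro _ ⟨x, rfl⟩
    exact hgen x
  have hspan : Set.EqOn ⇑D2 ⇑D1 ↑(Submodule.span ℂ (Set.range f)) :=
    fun x hx => LinearMap.eqOn_span hD12 hx
  have hcont : (⇑D2 : KG → K2) = ⇑D1 := by
    apply Continuous.ext_on hDf
    · exact U.continuous.comp (ψG.toFun a).continuous
    · exact (ψ2.toFun a).continuous.comp U.continuous
    · exact hspan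
  exact congrFun hcont k
end
end

section
/- Let A, B, C be C*-algebras, E a Hilbert B-module, F a Hilbert C-module, Φ₁ : A → L_B(E) and Φ₂ : B → L_C(F) non-degenerate *-homomorphisms, and (φ, H) a non-degenerate representation of C. Then the map (ξ ⊗ η) ⊗ h ↦ ξ ⊗ (η ⊗ h) extends to a unitary from _(E⊗_{Φ₂}F)H onto _E(_FH) intertwining the representations _{E⊗_{Φ₂}F}^Aφ and _E^A(_F^Bφ) of A. -/
noncomputable section

open Filter Topology Set
open scoped InnerProductSpace

universe u v w

section Aux

variable {K₁ : Type*} [NormedAddCommGroup K₁] [InnerProductSpace ℂ K₁] [CompleteSpace K₁]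
variable {K₂ : Type*} [NormedAddCommGroup K₂] [InnerProductSpace ℂ K₂] [CompleteSpace K₂]

/-- Abstract principle: two spanning families with equal Gram matrices in two Hilbert
spaces are matched by a unitary. -/
theorem exists_lie_of_gram {I : Type*} (f : I → K₁) (g : I → K₂)
    (hinner : ∀ i j, ⟪f i, f j⟫_ℂ = ⟪g i, g j⟫_ℂ)
    (hf : Dense (↑(Submodule.span ℂ (Set.range f)) : Set K₁))
    (hg : Dense (↑(Submodule.span ℂ (Set.range g)) : Set K₂)) :
    ∃ U : K₁ ≃ₗᵢ[ℂ] K₂, ∀ i, U (f i) = g i := by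
  classical
  set L : (I →₀ ℂ) →ₗ[ℂ] K₁ := Finsupp.linearCombination ℂ f with hL
  set L' : (I →₀ ℂ) →ₗ[ℂ] K₂ := Finsupp.linearCombination ℂ g with hL'
  have key : ∀ c d : I →₀ ℂ, ⟪L c, L d⟫_ℂ = ⟪L' c, L' d⟫_ℂ := by
    intro c d
    simp only [hL, hL', Finsupp.linearCombination_apply, Finsupp.sum,
      sum_inner, inner_sum, inner_smul_left, inner_smul_right, hinner]
  have keynorm : ∀ c, ‖L' c‖ = ‖L c‖ := by
    intro c
    rw [@norm_eq_sqrt_re_inner ℂ, @norm_eq_sqrt_re_inner ℂ, key c c]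
  have hker : LinearMap.ker L ≤ LinearMap.ker L' := by
    intro c hc
    rw [LinearMap.mem_ker] at hc ⊢
    have := keynorm c
    rw [hc, norm_zero] at this
    exact norm_eq_zero.mp this
  let Tq : ((I →₀ ℂ) ⧸ LinearMap.ker L) →ₗ[ℂ] K₂ := (LinearMap.ker L).liftQ L' hker
  let e₁ := LinearMap.quotKerEquivRange L
  let T : LinearMap.range L →ₗ[ℂ] K₂ := Tq.comp (e₁.symm : _ →ₗ[ℂ] _)
  have hT : ∀ (x : LinearMap.range L) (c : I →₀ ℂ), (x : K₁) = L c → T x = L' c := by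
    rintro ⟨x, hx⟩ c h
    simp only at h
    subst h
    have h1 : e₁ (Submodule.Quotient.mk c) = ⟨L c, hx⟩ := by
      ext; simp [e₁, LinearMap.quotKerEquivRange_apply_mk]
    have h2 : e₁.symm ⟨L c, hx⟩ = Submodule.Quotient.mk c := by
      rw [← h1, LinearEquiv.symm_apply_apply]
    simp only [T, LinearMap.comp_apply, LinearEquiv.coe_coe, h2, Tq, Submodule.liftQ_apply]
  have hTnorm : ∀ x : LinearMap.range L, ‖T x‖ = ‖x‖ := by
    rintro ⟨x, hx⟩
    obtain ⟨c, rfl⟩ := hx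
    rw [hT ⟨L c, ⟨c, rfl⟩⟩ c rfl]
    exact keynorm c
  let Tiso : LinearMap.range L →ₗᵢ[ℂ] K₂ := ⟨T, hTnorm⟩
  let e : LinearMap.range L →L[ℂ] K₁ := (LinearMap.range L).subtypeL
  have hrange : LinearMap.range L = Submodule.span ℂ (Set.range f) :=
    Finsupp.range_linearCombination ..
  have hdense : DenseRange e := by
    have : Set.range e = (LinearMap.range L : Set K₁) := Subtype.range_coe
    rw [DenseRange, this, hrange]
    exact hf
  have huni : IsUniformInducing e := isUniformEmbedding_subtype_val.isUniformInducing
  let Text : K₁ →L[ℂ] K₂ := Tiso.toContinuousLinearMap.extend e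
  have hText : ∀ x : LinearMap.range L, Text x = T x := fun x =>
    ContinuousLinearMap.extend_eq _ hdense huni x
  have hTextnorm : ∀ x : K₁, ‖Text x‖ = ‖x‖ := by
    have hcl : IsClosed {x : K₁ | ‖Text x‖ = ‖x‖} :=
      isClosed_eq Text.continuous.norm continuous_norm
    intro x
    refine hdense.induction_on x hcl fun y => ?_
    show ‖Text y‖ = ‖(y : K₁)‖
    rw [hText y]
    exact hTnorm y
  let T1 : K₁ →ₗᵢ[ℂ] K₂ := ⟨Text.toLinearMap, hTextnorm⟩
  have hfi : ∀ i, f i = L (Finsupp.single i 1) := by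
    intro i; simp [hL]
  have hgi : ∀ i, g i = L' (Finsupp.single i 1) := by
    intro i; simp [hL']
  have hT1 : ∀ i, T1 (f i) = g i := by
    intro i
    have hm : f i ∈ LinearMap.range L := ⟨Finsupp.single i 1, (hfi i).symm⟩
    have : T1 (f i) = Text ((⟨f i, hm⟩ : LinearMap.range L) : K₁) := rfl
    rw [this, hText ⟨f i, hm⟩, hT ⟨f i, hm⟩ (Finsupp.single i 1) (hfi i), ← hgi]
  have hsurj : Function.Surjective T1 := by
    have hclosed : IsClosed (Set.range T1) := T1.isometry.isClosedEmbedding.isClosed_range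
    have hle : Submodule.span ℂ (Set.range g) ≤ LinearMap.range T1.toLinearMap := by
      refine Submodule.span_le.2 ?_
      rintro _ ⟨i, rfl⟩
      exact ⟨f i, hT1 i⟩
    intro y
    have hy : y ∈ closure (↑(Submodule.span ℂ (Set.range g)) : Set K₂) := hg y
    have hsub : (↑(Submodule.span ℂ (Set.range g)) : Set K₂) ⊆ Set.range T1 := by
      intro z hz
      obtain ⟨w, hw⟩ := hle hz
      exact ⟨w, hw⟩
    have := closure_mono hsub hy
    rwa [hclosed.closure_eq] at this
  refine ⟨LinearIsometryEquiv.ofSurjective T1 hsurj, fun i => ?_⟩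
  rw [show (LinearIsometryEquiv.ofSurjective T1 hsurj) (f i) = T1 (f i) from
    congrFun (LinearIsometryEquiv.coe_ofSurjective T1 hsurj) (f i)]
  exact hT1 i

end Aux
section Aux2

variable {K : Type*} [NormedAddCommGroup K] [InnerProductSpace ℂ K] [CompleteSpace K]

theorem norm_le_of_sq_le' {v : K} {D t : ℝ} (hD : 0 ≤ D) (ht : 0 ≤ t)
    (hv : ‖v‖ ^ 2 ≤ D ^ 2 * t ^ 2) : ‖v‖ ≤ D * t := by
  nlinarith [norm_nonneg v, mul_nonneg hD ht]

/-- The map `h ↦ ι ξ h` of an induced-space datum is (restricts to) a continuous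
linear map in the Hilbert-space variable. -/
theorem secondVar_exists_clm {B' E' : Type*}
    {H' : Type*} [NormedAddCommGroup H'] [InnerProductSpace ℂ H'] [CompleteSpace H']
    {innerE : E' → E' → B'} {φf : B' → H' →L[ℂ] H'}
    (ind : InducedSpace innerE φf K) (ξ : E') :
    ∃ L : H' →L[ℂ] K, ∀ h, L h = ind.ι ξ h := by
  set T := φf (innerE ξ ξ) with hTdef
  have hh : ∀ a b : H', ⟪ind.ι ξ a, ind.ι ξ b⟫_ℂ = ⟪a, T b⟫_ℂ := fun a b => ind.inner_eq ξ ξ a b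
  have hadd : ∀ x y : H', ind.ι ξ (x + y) = ind.ι ξ x + ind.ι ξ y := by
    intro x y
    have h0 : ⟪ind.ι ξ (x + y) - (ind.ι ξ x + ind.ι ξ y),
        ind.ι ξ (x + y) - (ind.ι ξ x + ind.ι ξ y)⟫_ℂ = 0 := by
      simp only [inner_sub_left, inner_sub_right, inner_add_left, inner_add_right, hh, map_add]
      ring
    have := inner_self_eq_zero.mp h0
    exact sub_eq_zero.mp this
  have hsmul : ∀ (c : ℂ) (x : H'), ind.ι ξ (c • x) = c • ind.ι ξ x := by
    intro c x
    have h0 : ⟪ind.ι ξ (c • x) - c • ind.ι ξ x, ind.ι ξ (c • x) - c • ind.ι ξ x⟫_ℂ = 0 := by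
      simp only [inner_sub_left, inner_sub_right, inner_smul_left, inner_smul_right, hh, map_smul]
      ring
    exact sub_eq_zero.mp (inner_self_eq_zero.mp h0)
  have hbound : ∀ x : H', ‖ind.ι ξ x‖ ≤ Real.sqrt ‖T‖ * ‖x‖ := by
    intro x
    refine norm_le_of_sq_le' (Real.sqrt_nonneg _) (norm_nonneg _) ?_
    rw [Real.sq_sqrt (norm_nonneg _)]
    have h1 : ‖ind.ι ξ x‖ ^ 2 = RCLike.re ⟪ind.ι ξ x, ind.ι ξ x⟫_ℂ :=
      (inner_self_eq_norm_sq _).symm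
    rw [h1, hh]
    calc RCLike.re ⟪x, T x⟫_ℂ ≤ ‖⟪x, T x⟫_ℂ‖ := RCLike.re_le_norm _
      _ ≤ ‖x‖ * ‖T x‖ := norm_inner_le_norm _ _
      _ ≤ ‖x‖ * (‖T‖ * ‖x‖) :=
          mul_le_mul_of_nonneg_left (T.le_opNorm x) (norm_nonneg _)
      _ = ‖T‖ * ‖x‖ ^ 2 := by ring
  let lm : H' →ₗ[ℂ] K :=
    { toFun := fun x => ind.ι ξ x
      map_add' := hadd
      map_smul' := hsmul }
  exact ⟨lm.mkContinuous (Real.sqrt ‖T‖) hbound, fun x => rfl⟩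

/-- The map `x ↦ ι x h` of an induced-space datum over a Hilbert C*-module is
(restricts to) a continuous linear map in the module variable. -/
theorem firstVar_exists_clm {C' : Type*} [NormedRing C'] [StarRing C'] [CStarRing C']
    [NormedAlgebra ℂ C'] [StarModule ℂ C'] [CompleteSpace C']
    {G' : Type*} [NormedAddCommGroup G'] [NormedSpace ℂ G']
    {H' : Type*} [NormedAddCommGroup H'] [InnerProductSpace ℂ H'] [CompleteSpace H']
    (P : HilbertCStarModule C' G') (φ : RepOn C' H')
    (ind : InducedSpace P.inner φ.toFun K)
    (Cb : ℝ) (hCb : 0 ≤ Cb) (hb : ∀ c, ‖φ.toFun c‖ ≤ Cb * ‖c‖) (h : H') :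
    ∃ L : G' →L[ℂ] K, ∀ x, L x = ind.ι x h := by
  have pal : ∀ x y z : G', P.inner (x + y) z = P.inner x z + P.inner y z := by
    intro x y z
    rw [← P.star_inner z (x + y), P.inner_add_right, star_add, P.star_inner, P.star_inner]
  have psl : ∀ (c : ℂ) (x z : G'), P.inner (c • x) z = (starRingEnd ℂ c) • P.inner x z := by
    intro c x z
    rw [← P.star_inner z (c • x), P.inner_smulC, star_smul, P.star_inner]
    rfl
  have hh : ∀ x y : G', ⟪ind.ι x h, ind.ι y h⟫_ℂ = ⟪h, φ.toFun (P.inner x y) h⟫_ℂ :=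
    fun x y => ind.inner_eq x y h h
  have e1 : ∀ x y z : G', φ.toFun (P.inner (x + y) z)
      = φ.toFun (P.inner x z) + φ.toFun (P.inner y z) := by
    intro x y z; rw [pal, φ.map_add]
  have e2 : ∀ x y z : G', φ.toFun (P.inner x (y + z))
      = φ.toFun (P.inner x y) + φ.toFun (P.inner x z) := by
    intro x y z; rw [P.inner_add_right, φ.map_add]
  have e3 : ∀ (c : ℂ) (x z : G'), φ.toFun (P.inner (c • x) z)
      = (starRingEnd ℂ c) • φ.toFun (P.inner x z) := by
    intro c x z; rw [psl, φ.map_smulC]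
  have e4 : ∀ (c : ℂ) (x z : G'), φ.toFun (P.inner x (c • z))
      = c • φ.toFun (P.inner x z) := by
    intro c x z; rw [P.inner_smulC, φ.map_smulC]
  have hadd : ∀ x y : G', ind.ι (x + y) h = ind.ι x h + ind.ι y h := by
    intro x y
    have h0 : ⟪ind.ι (x + y) h - (ind.ι x h + ind.ι y h),
        ind.ι (x + y) h - (ind.ι x h + ind.ι y h)⟫_ℂ = 0 := by
      simp only [inner_sub_left, inner_sub_right, inner_add_left, inner_add_right, hh,
        e1, e2, ContinuousLinearMap.add_apply]
      ring
    exact sub_eq_zero.mp (inner_self_eq_zero.mp h0)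
  have hsmul : ∀ (c : ℂ) (x : G'), ind.ι (c • x) h = c • ind.ι x h := by
    intro c x
    have h0 : ⟪ind.ι (c • x) h - c • ind.ι x h,
        ind.ι (c • x) h - c • ind.ι x h⟫_ℂ = 0 := by
      simp only [inner_sub_left, inner_sub_right, inner_smul_left, inner_smul_right, hh,
        e3, e4, ContinuousLinearMap.smul_apply, inner_smul_left, inner_smul_right]
      ring
    exact sub_eq_zero.mp (inner_self_eq_zero.mp h0)
  have hnx : ∀ x : G', ‖P.inner x x‖ = ‖x‖ ^ 2 := by
    intro x
    have := P.norm_eq x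
    rw [this, Real.sq_sqrt (norm_nonneg _)]
  have hbound : ∀ x : G', ‖ind.ι x h‖ ≤ Real.sqrt Cb * ‖h‖ * ‖x‖ := by
    intro x
    have key : ‖ind.ι x h‖ ^ 2 ≤ (Real.sqrt Cb * ‖h‖) ^ 2 * ‖x‖ ^ 2 := by
      have h1 : ‖ind.ι x h‖ ^ 2 = RCLike.re ⟪ind.ι x h, ind.ι x h⟫_ℂ :=
        (inner_self_eq_norm_sq _).symm
      rw [h1, hh]
      have c1 : RCLike.re ⟪h, φ.toFun (P.inner x x) h⟫_ℂ ≤ ‖h‖ * (‖φ.toFun (P.inner x x)‖ * ‖h‖) :=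
        le_trans (RCLike.re_le_norm _) (le_trans (norm_inner_le_norm _ _)
          (mul_le_mul_of_nonneg_left ((φ.toFun (P.inner x x)).le_opNorm h) (norm_nonneg _)))
      have c2 : ‖φ.toFun (P.inner x x)‖ ≤ Cb * ‖x‖ ^ 2 := by
        have := hb (P.inner x x)
        rwa [hnx] at this
      have c3 : (Real.sqrt Cb * ‖h‖) ^ 2 = Cb * ‖h‖ ^ 2 := by
        rw [mul_pow, Real.sq_sqrt hCb]
      rw [c3]
      nlinarith [norm_nonneg h, norm_nonneg x, norm_nonneg (φ.toFun (P.inner x x))]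
    exact norm_le_of_sq_le' (mul_nonneg (Real.sqrt_nonneg _) (norm_nonneg _)) (norm_nonneg _) key
  let lm : G' →ₗ[ℂ] K :=
    { toFun := fun x => ind.ι x h
      map_add' := hadd
      map_smul' := hsmul }
  exact ⟨lm.mkContinuous (Real.sqrt Cb * ‖h‖) hbound, fun x => rfl⟩

end Aux2
/-- **Induction in stages for C*-algebras, Rieffel.** With non-degenerate
`*`-homomorphisms `Φ₁ : A → L_B(E)`, `Φ₂ : B → L_C(F)` and a non-degenerate
representation `(φ, H)` of `C`, the map `(ξ ⊗ η) ⊗ h ↦ ξ ⊗ (η ⊗ h)` extends to a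
unitary from `_{E⊗F}H` onto `_E(_FH)` intertwining the induced representations of `A`. -/
theorem statement12 (A : Type u) [NormedRing A] [StarRing A] [CStarRing A] [NormedAlgebra ℂ A] [StarModule ℂ A] [CompleteSpace A]
    (B : Type u) [NormedRing B] [StarRing B] [CStarRing B] [NormedAlgebra ℂ B] [StarModule ℂ B] [CompleteSpace B]
    (C : Type u) [NormedRing C] [StarRing C] [CStarRing C] [NormedAlgebra ℂ C] [StarModule ℂ C] [CompleteSpace C]
    (E : Type u) [NormedAddCommGroup E] [NormedSpace ℂ E]
    (F : Type u) [NormedAddCommGroup F] [NormedSpace ℂ F]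
    (M : HilbertCStarModule B E) (N : HilbertCStarModule C F)
    -- Φ₁ : A → L_B(E), a non-degenerate *-homomorphism
    (Φ₁ : A → E → E)
    (h1add : ∀ a b ξ, Φ₁ (a + b) ξ = Φ₁ a ξ + Φ₁ b ξ)
    (h1mul : ∀ a b ξ, Φ₁ (a * b) ξ = Φ₁ a (Φ₁ b ξ))
    (h1smul : ∀ (c : ℂ) a ξ, Φ₁ (c • a) ξ = c • Φ₁ a ξ)
    (h1adj : ∀ a, Adjointable M.inner (Φ₁ a) (Φ₁ (star a)))
    (h1nd : Dense (↑(Submodule.span ℂ {ξ : E | ∃ a η, ξ = Φ₁ a η}) : Set E))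
    -- Φ₂ : B → L_C(F), a non-degenerate *-homomorphism
    (Φ₂ : B → F → F)
    (h2add : ∀ b b' η, Φ₂ (b + b') η = Φ₂ b η + Φ₂ b' η)
    (h2mul : ∀ b b' η, Φ₂ (b * b') η = Φ₂ b (Φ₂ b' η))
    (h2smul : ∀ (c : ℂ) b η, Φ₂ (c • b) η = c • Φ₂ b η)
    (h2adj : ∀ b, Adjointable N.inner (Φ₂ b) (Φ₂ (star b)))
    (h2nd : Dense (↑(Submodule.span ℂ {η : F | ∃ b ζ, η = Φ₂ b ζ}) : Set F))
    -- the inner tensor product G = E ⊗_{Φ₂} F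
    (G : Type u) [NormedAddCommGroup G] [NormedSpace ℂ G]
    (P : HilbertCStarModule C G) (τ : E → F → G)
    (hτ_inner : ∀ ξ₁ η₁ ξ₂ η₂,
      P.inner (τ ξ₁ η₁) (τ ξ₂ η₂) = N.inner η₁ (Φ₂ (M.inner ξ₁ ξ₂) η₂))
    (hτ_dense : Dense (↑(Submodule.span ℂ {x : G | ∃ ξ η, x = τ ξ η}) : Set G))
    -- a non-degenerate representation of C
    (H : Type u) [NormedAddCommGroup H] [InnerProductSpace ℂ H] [CompleteSpace H]
    (φ : RepOn C H) (hφ : φ.Nondegenerate)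
    -- induction via G, with A acting via (Φ₂)_* ∘ Φ₁
    (KG : Type u) [NormedAddCommGroup KG] [InnerProductSpace ℂ KG] [CompleteSpace KG]
    (indG : InducedSpace P.inner φ.toFun KG)
    (ψG : RepOn A KG) (hψG : ∀ a ξ η h, ψG.toFun a (indG.ι (τ ξ η) h) = indG.ι (τ (Φ₁ a ξ) η) h)
    -- induction via F, giving a representation of B
    (KF : Type u) [NormedAddCommGroup KF] [InnerProductSpace ℂ KF] [CompleteSpace KF]
    (indF : InducedSpace N.inner φ.toFun KF)
    (ψF : RepOn B KF) (hψF : ∀ b η h, ψF.toFun b (indF.ι η h) = indF.ι (Φ₂ b η) h)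
    -- then induction via E from (ψF, KF)
    (K2 : Type u) [NormedAddCommGroup K2] [InnerProductSpace ℂ K2] [CompleteSpace K2]
    (ind2 : InducedSpace M.inner ψF.toFun K2)
    (ψ2 : RepOn A K2) (hψ2 : ∀ a ξ k, ψ2.toFun a (ind2.ι ξ k) = ind2.ι (Φ₁ a ξ) k) :
    ∃ U : KG ≃ₗᵢ[ℂ] K2,
      (∀ ξ η h, U (indG.ι (τ ξ η) h) = ind2.ι ξ (indF.ι η h)) ∧
      ∀ a k, U (ψG.toFun a k) = ψ2.toFun a (U k) := by
  classical
  -- `φ` is a bounded linear map into `B(H)`.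
  let φlin : C →ₗ[ℂ] (H →L[ℂ] H) :=
    { toFun := φ.toFun, map_add' := φ.map_add, map_smul' := φ.map_smulC }
  let φclm : C →L[ℂ] (H →L[ℂ] H) := { toLinearMap := φlin, cont := φ.continuous }
  have hb : ∀ c, ‖φ.toFun c‖ ≤ ‖φclm‖ * ‖c‖ := fun c => φclm.le_opNorm c
  have hCb : (0 : ℝ) ≤ ‖φclm‖ := norm_nonneg _
  -- The two spanning families with equal Gram matrices.
  set f : E × F × H → KG := fun p => indG.ι (τ p.1 p.2.1) p.2.2 with hf_def
  set g : E × F × H → K2 := fun p => ind2.ι p.1 (indF.ι p.2.1 p.2.2) with hg_def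
  have hinner : ∀ p q, ⟪f p, f q⟫_ℂ = ⟪g p, g q⟫_ℂ := by
    rintro ⟨ξ₁, η₁, h₁⟩ ⟨ξ₂, η₂, h₂⟩
    simp only [hf_def, hg_def]
    rw [indG.inner_eq, hτ_inner, ind2.inner_eq, hψF, indF.inner_eq]
  -- Density of the span of `f` in `KG`.
  have hfd : Dense (↑(Submodule.span ℂ (Set.range f)) : Set KG) := by
    set S := (Submodule.span ℂ (Set.range f)).topologicalClosure with hS
    have hSclosed : IsClosed (S : Set KG) := Submodule.isClosed_topologicalClosure _
    have step1 : ∀ (x : G) (h : H), indG.ι x h ∈ S := by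
      intro x h
      obtain ⟨Lh, hLh⟩ := firstVar_exists_clm P φ indG ‖φclm‖ hCb hb h
      have hcomap : Submodule.span ℂ {x : G | ∃ ξ η, x = τ ξ η}
          ≤ S.comap (Lh : G →ₗ[ℂ] KG) := by
        refine Submodule.span_le.2 ?_
        rintro _ ⟨ξ, η, rfl⟩
        have : Lh (τ ξ η) = f (ξ, η, h) := by rw [hLh]
        simp only [Set.mem_setOf_eq, SetLike.mem_coe, Submodule.mem_comap,
          ContinuousLinearMap.coe_coe, this]
        exact Submodule.le_topologicalClosure _ (Submodule.subset_span ⟨(ξ, η, h), rfl⟩)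
      have hclosedpre : IsClosed ((S.comap (Lh : G →ₗ[ℂ] KG) : Submodule ℂ G) : Set G) := by
        have : ((S.comap (Lh : G →ₗ[ℂ] KG) : Submodule ℂ G) : Set G) = Lh ⁻¹' (S : Set KG) :=
          rfl
        rw [this]
        exact hSclosed.preimage Lh.continuous
      have hx : x ∈ closure (↑(Submodule.span ℂ {x : G | ∃ ξ η, x = τ ξ η}) : Set G) :=
        hτ_dense x
      have hmem : x ∈ (S.comap (Lh : G →ₗ[ℂ] KG) : Submodule ℂ G) :=
        closure_minimal hcomap hclosedpre hx
      have := Submodule.mem_comap.mp hmem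
      rwa [ContinuousLinearMap.coe_coe, hLh] at this
    have step2 : (↑(Submodule.span ℂ {k : KG | ∃ x h, k = indG.ι x h}) : Set KG)
        ⊆ (S : Set KG) := by
      refine Submodule.span_le.2 ?_
      rintro _ ⟨x, h, rfl⟩
      exact step1 x h
    have hclos : closure (↑(Submodule.span ℂ (Set.range f)) : Set KG) = Set.univ := by
      rw [← Submodule.topologicalClosure_coe]
      refine Set.eq_univ_iff_forall.2 fun k => ?_
      have hk := indG.dense k
      exact closure_minimal step2 hSclosed hk
    rwa [dense_iff_closure_eq]
  -- Density of the span of `g` in `K2`.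
  have hgd : Dense (↑(Submodule.span ℂ (Set.range g)) : Set K2) := by
    set S := (Submodule.span ℂ (Set.range g)).topologicalClosure with hS
    have hSclosed : IsClosed (S : Set K2) := Submodule.isClosed_topologicalClosure _
    have step1 : ∀ (ξ : E) (k : KF), ind2.ι ξ k ∈ S := by
      intro ξ k
      obtain ⟨Lk, hLk⟩ := secondVar_exists_clm ind2 ξ
      have hcomap : Submodule.span ℂ {k : KF | ∃ η h, k = indF.ι η h}
          ≤ S.comap (Lk : KF →ₗ[ℂ] K2) := by
        refine Submodule.span_le.2 ?_
        rintro _ ⟨η, h, rfl⟩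
        have : Lk (indF.ι η h) = g (ξ, η, h) := by rw [hLk]
        simp only [Set.mem_setOf_eq, SetLike.mem_coe, Submodule.mem_comap,
          ContinuousLinearMap.coe_coe, this]
        exact Submodule.le_topologicalClosure _ (Submodule.subset_span ⟨(ξ, η, h), rfl⟩)
      have hclosedpre : IsClosed ((S.comap (Lk : KF →ₗ[ℂ] K2) : Submodule ℂ KF) : Set KF) := by
        have : ((S.comap (Lk : KF →ₗ[ℂ] K2) : Submodule ℂ KF) : Set KF)
            = Lk ⁻¹' (S : Set K2) := rfl
        rw [this]
        exact hSclosed.preimage Lk.continuous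
      have hk : k ∈ closure (↑(Submodule.span ℂ {k : KF | ∃ η h, k = indF.ι η h}) : Set KF) :=
        indF.dense k
      have hmem : k ∈ (S.comap (Lk : KF →ₗ[ℂ] K2) : Submodule ℂ KF) :=
        closure_minimal hcomap hclosedpre hk
      have := Submodule.mem_comap.mp hmem
      rwa [ContinuousLinearMap.coe_coe, hLk] at this
    have step2 : (↑(Submodule.span ℂ {k : K2 | ∃ ξ k', k = ind2.ι ξ k'}) : Set K2)
        ⊆ (S : Set K2) := by
      refine Submodule.span_le.2 ?_
      rintro _ ⟨ξ, k, rfl⟩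
      exact step1 ξ k
    have hclos : closure (↑(Submodule.span ℂ (Set.range g)) : Set K2) = Set.univ := by
      rw [← Submodule.topologicalClosure_coe]
      refine Set.eq_univ_iff_forall.2 fun k => ?_
      have hk := ind2.dense k
      exact closure_minimal step2 hSclosed hk
    rwa [dense_iff_closure_eq]
  -- The unitary.
  obtain ⟨U, hU⟩ := exists_lie_of_gram f g hinner hfd hgd
  refine ⟨U, fun ξ η h => hU (ξ, η, h), ?_⟩
  intro a k
  let UL : KG →L[ℂ] K2 := U.toLinearIsometry.toContinuousLinearMap
  have hULeq : ∀ x : KG, UL x = U x := fun x => rfl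
  have hext : UL.comp (ψG.toFun a) = (ψ2.toFun a).comp UL := by
    refine ContinuousLinearMap.ext_on hfd ?_
    rintro _ ⟨⟨ξ, η, h⟩, rfl⟩
    simp only [ContinuousLinearMap.comp_apply, hULeq]
    have l1 : ψG.toFun a (f (ξ, η, h)) = f (Φ₁ a ξ, η, h) := hψG a ξ η h
    have l2 : ψ2.toFun a (g (ξ, η, h)) = g (Φ₁ a ξ, η, h) := hψ2 a ξ (indF.ι η h)
    rw [l1, hU, hU, l2]
  have := congrFun (congrArg (fun (T : KG →L[ℂ] K2) => (T : KG → K2)) hext) k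
  simpa only [ContinuousLinearMap.comp_apply, hULeq] using this
end
end
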